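/- arXiv:2307.06700 — 2 statements merged into one kernel-verified Lean document; each statement's English description precedes it below -/
import Mathlib

section
/- Let D be a digraph on n vertices and k ≥ 2(δ*_c(D) + 1). Then for any two k-dicolourings α, β of D there exists a redicolouring sequence from α to β in which every vertex is recoloured at most δ*_c(D) + 1 times; in particular, the diameter of the k-dicolouring graph of D is at most (δ*_c(D) + 1)·n. -/
set_option linter.unusedSectionVars false
set_option maxHeartbeats 1600000


variable {V : Type*}

/-- A directed cycle in the digraph with arc relation `A`: a nonempty list of
pairwise distinct vertices forming a closed directed walk. -/
def IsDicycle (A : V → V → Prop) (l : List V) : Prop :=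
  l ≠ [] ∧ l.Nodup ∧ l.Chain' A ∧ ∀ x ∈ l.getLast?, ∀ y ∈ l.head?, A x y

/-- The digraph with arc relation `A` has no directed cycle. -/
def Acyclic (A : V → V → Prop) : Prop := ¬ ∃ l : List V, IsDicycle A l

/-- `S` intersects every directed cycle of `A` containing `v`. -/
def HitsCyclesThrough (A : V → V → Prop) (v : V) (S : Finset V) : Prop :=
  ∀ l : List V, IsDicycle A l → v ∈ l → ∃ u ∈ l, u ∈ S

/-- The cycle-degree of `v`: the minimum size of a set `S ⊆ V \ {v}`
intersecting every directed cycle containing `v`. -/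
noncomputable def cycleDegree (A : V → V → Prop) (v : V) : ℕ :=
  sInf { n | ∃ S : Finset V, S.card = n ∧ v ∉ S ∧ HitsCyclesThrough A v S }

/-- `(U, E)` is a (nonempty) subdigraph of the digraph on `V` with arcs `A`. -/
def IsSubdigraph (A : V → V → Prop) (U : Finset V) (E : Finset (V × V)) : Prop :=
  U.Nonempty ∧ ∀ p ∈ E, A p.1 p.2 ∧ p.1 ∈ U ∧ p.2 ∈ U

/-- The arc relation of a finite arc set. -/
def arcRel (E : Finset (V × V)) : V → V → Prop := fun x y => (x, y) ∈ E

/-- The cycle-degeneracy of the digraph `A`: the maximum, over all subdigraphs,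
of the minimum cycle-degree. -/
noncomputable def cycleDegeneracy (A : V → V → Prop) : ℕ :=
  sSup { m | ∃ (U : Finset V) (E : Finset (V × V)),
    IsSubdigraph A U E ∧ ∀ v ∈ U, m ≤ cycleDegree (arcRel E) v }

/-- A dicolouring: every colour class induces an acyclic subdigraph. -/
def IsDicolouring {C : Type*} (A : V → V → Prop) (φ : V → C) : Prop :=
  ∀ c : C, Acyclic fun x y => A x y ∧ φ x = c ∧ φ y = c

/-- The dichromatic number: least `k` admitting a `k`-dicolouring. -/
noncomputable def dichromaticNumber (A : V → V → Prop) : ℕ :=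
  sInf { k | ∃ φ : V → Fin k, IsDicolouring A φ }

/-- One step in the `k`-dicolouring graph: both are dicolourings and they
differ on exactly one vertex. -/
def DicolStep (A : V → V → Prop) {k : ℕ} (α β : V → Fin k) : Prop :=
  IsDicolouring A α ∧ IsDicolouring A β ∧ ∃! v, α v ≠ β v

/-- `l` is (the list of successive colourings of) a redicolouring sequence from
`α` to `β`. -/
def RedicolPath (A : V → V → Prop) {k : ℕ} (α β : V → Fin k)
    (l : List (V → Fin k)) : Prop :=
  List.Chain (DicolStep A) α l ∧ (α :: l).getLast (List.cons_ne_nil _ _) = β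

/-- The number of times vertex `v` is recoloured along the sequence of
colourings `l`. -/
def countRecol {k : ℕ} (v : V) (l : List (V → Fin k)) : ℕ :=
  (l.zip l.tail).countP fun p => decide (p.1 v ≠ p.2 v)

section PartA
variable {A B : V → V → Prop} {l : List V}

lemma chain'_congr_mem (h : l.Chain' A) (H : ∀ a ∈ l, ∀ b ∈ l, A a b → B a b) :
    l.Chain' B := by
  change List.IsChain A l at h; change List.IsChain B l
  rw [List.isChain_iff_getElem] at h ⊢
  intro i hi
  exact H _ (List.getElem_mem _) _ (List.getElem_mem _) (h i hi)

lemma dicycle_congr_mem (h : IsDicycle A l) (H : ∀ a ∈ l, ∀ b ∈ l, A a b → B a b) :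
    IsDicycle B l := by
  obtain ⟨h1, h2, h3, h4⟩ := h
  refine ⟨h1, h2, chain'_congr_mem h3 H, ?_⟩
  intro x hx y hy
  exact H _ (List.mem_of_mem_getLast? hx) _ (List.mem_of_mem_head? hy) (h4 x hx y hy)

lemma dicycle_imp (H : ∀ a b, A a b → B a b) (h : IsDicycle A l) : IsDicycle B l :=
  dicycle_congr_mem h (fun a _ b _ => H a b)

lemma dicycle_source (h : IsDicycle A l) {x : V} (hx : x ∈ l) : ∃ y, A x y := by
  obtain ⟨h1, h2, h3, h4⟩ := h
  rw [List.mem_iff_get] at hx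
  obtain ⟨⟨i, hi⟩, rfl⟩ := hx
  rcases lt_or_ge (i + 1) l.length with hlt | hge
  · exact ⟨l.get ⟨i + 1, hlt⟩, (List.isChain_iff_getElem.mp h3) i (by omega)⟩
  · have hi' : i = l.length - 1 := by omega
    refine ⟨l.head h1, ?_⟩
    apply h4
    · rw [List.getLast?_eq_getLast h1]
      simp only [Option.mem_def, Option.some.injEq]
      rw [List.getLast_eq_getElem]
      subst hi'; rfl
    · rw [List.head?_eq_head h1]; rfl

lemma dicolouring_mono {C : Type*} {φ : V → C} (H : ∀ a b, B a b → A a b)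
    (h : IsDicolouring A φ) : IsDicolouring B φ := by
  intro c ⟨l, hl⟩
  exact h c ⟨l, dicycle_imp (fun a b hab => ⟨H a b hab.1, hab.2⟩) hl⟩

lemma dicolouring_congr {C : Type*} {φ : V → C} (H : ∀ a b, A a b ↔ B a b) :
    IsDicolouring A φ ↔ IsDicolouring B φ :=
  ⟨dicolouring_mono (fun a b h => (H a b).mpr h),
   dicolouring_mono (fun a b h => (H a b).mp h)⟩

end PartA

section PartB
variable [DecidableEq V] {A : V → V → Prop} {k : ℕ}

/-- The subdigraph relation induced on a finite vertex set. -/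
def relF (A : V → V → Prop) (U : Finset V) : V → V → Prop :=
  fun x y => A x y ∧ x ∈ U ∧ y ∈ U

lemma relF_mono {U U' : Finset V} (h : U' ⊆ U) :
    ∀ a b, relF A U' a b → relF A U a b :=
  fun _ _ hab => ⟨hab.1, h hab.2.1, h hab.2.2⟩

lemma dicycle_relF_mem {U : Finset V} {l : List V} (h : IsDicycle (relF A U) l) :
    ∀ x ∈ l, x ∈ U := by
  intro x hx
  obtain ⟨y, hy⟩ := dicycle_source h hx
  exact hy.2.1

/-- no loops at vertices of `U` if there is a dicolouring of `relF A U`. -/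
lemma no_loop_of_dicolouring {U : Finset V} {φ : V → Fin k}
    (hφ : IsDicolouring (relF A U) φ) : ∀ u, ¬ relF A U u u := by
  intro u hu
  refine hφ (φ u) ⟨[u], ?_⟩
  refine ⟨by simp, by simp, List.IsChain.singleton u, ?_⟩
  intro x hx y hy
  simp only [List.getLast?_singleton, Option.mem_def, Option.some.injEq] at hx
  simp only [List.head?_cons, Option.mem_def, Option.some.injEq] at hy
  subst hx; subst hy
  exact ⟨hu, rfl, rfl⟩

/-- source of a monochromatic dicycle has the colour. -/
lemma mono_colour {R : V → V → Prop} {φ : V → Fin k} {c : Fin k} {l : List V}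
    (h : IsDicycle (fun x y => R x y ∧ φ x = c ∧ φ y = c) l) :
    ∀ x ∈ l, φ x = c := by
  intro x hx
  obtain ⟨y, hy⟩ := dicycle_source h hx
  exact hy.2.1

/-- A dicolouring of `relF A (U.erase v)` is unaffected at `v`. -/
lemma dicolouring_update_erase {U : Finset V} {v : V} {φ : V → Fin k} (x : Fin k)
    (hφ : IsDicolouring (relF A (U.erase v)) φ) :
    IsDicolouring (relF A (U.erase v)) (Function.update φ v x) := by
  intro c ⟨l, hl⟩
  have hmem : ∀ a ∈ l, a ∈ U.erase v :=
    dicycle_relF_mem (dicycle_imp (fun a b hab => hab.1) hl)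
  refine hφ c ⟨l, dicycle_congr_mem hl ?_⟩
  intro a ha b hb hab
  have hav : a ≠ v := Finset.ne_of_mem_erase (hmem a ha)
  have hbv : b ≠ v := Finset.ne_of_mem_erase (hmem b hb)
  refine ⟨hab.1, ?_, ?_⟩
  · rw [← hab.2.1, Function.update_of_ne hav]
  · rw [← hab.2.2, Function.update_of_ne hbv]

/-- Key safety lemma: updating `v` to a colour not on `S` is a dicolouring. -/
lemma update_safe {U : Finset V} {v : V} {S : Finset V} {φ : V → Fin k} {x : Fin k}
    (hφ : IsDicolouring (relF A (U.erase v)) φ)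
    (hS : HitsCyclesThrough (relF A U) v S) (hvS : v ∉ S)
    (hx : ∀ u ∈ S, φ u ≠ x) :
    IsDicolouring (relF A U) (Function.update φ v x) := by
  intro c ⟨l, hl⟩
  by_cases hvl : v ∈ l
  · -- the cycle goes through v
    have hcol : ∀ a ∈ l, Function.update φ v x a = c := mono_colour hl
    have hcx : c = x := by
      rw [← hcol v hvl, Function.update_self]
    obtain ⟨u, hul, huS⟩ := hS l (dicycle_imp (fun a b hab => hab.1) hl) hvl
    have huv : u ≠ v := fun h => hvS (h ▸ huS)
    have := hcol u hul
    rw [Function.update_of_ne huv, hcx] at this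
    exact hx u huS this
  · -- the cycle avoids v
    have hmem : ∀ a ∈ l, a ∈ U :=
      dicycle_relF_mem (dicycle_imp (fun a b hab => hab.1) hl)
    refine hφ c ⟨l, dicycle_congr_mem hl ?_⟩
    intro a ha b hb hab
    have hav : a ≠ v := fun h => hvl (h ▸ ha)
    have hbv : b ≠ v := fun h => hvl (h ▸ hb)
    refine ⟨⟨hab.1.1, Finset.mem_erase.mpr ⟨hav, hmem a ha⟩,
      Finset.mem_erase.mpr ⟨hbv, hmem b hb⟩⟩, ?_, ?_⟩
    · rw [← hab.2.1, Function.update_of_ne hav]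
    · rw [← hab.2.2, Function.update_of_ne hbv]

/-- If `φ` is a `relF A (U.erase v)`-dicolouring but `update φ v x` is not a
`relF A U`-dicolouring, then some vertex of `S` has colour `x`. -/
lemma blocked_colour_mem {U : Finset V} {v : V} {S : Finset V} {φ : V → Fin k} {x : Fin k}
    (hφ : IsDicolouring (relF A (U.erase v)) φ)
    (hS : HitsCyclesThrough (relF A U) v S) (hvS : v ∉ S)
    (hbad : ¬ IsDicolouring (relF A U) (Function.update φ v x)) :
    ∃ u ∈ S, φ u = x := by
  by_contra h
  push_neg at h
  exact hbad (update_safe hφ hS hvS h)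

end PartB

section PartC
variable [Fintype V] [DecidableEq V] {A : V → V → Prop} {k : ℕ}

lemma hits_congr {R R' : V → V → Prop} {v : V} {S : Finset V}
    (H : ∀ a b, R a b ↔ R' a b) (h : HitsCyclesThrough R v S) :
    HitsCyclesThrough R' v S := fun l hl hv =>
  h l (dicycle_imp (fun a b hab => (H a b).mpr hab) hl) hv

lemma cycleDegree_le_card (R : V → V → Prop) (v : V) :
    cycleDegree R v ≤ Fintype.card V := by
  unfold cycleDegree
  by_cases h : { n | ∃ S : Finset V, S.card = n ∧ v ∉ S ∧ HitsCyclesThrough R v S }.Nonempty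
  · obtain ⟨S, hcard, -, -⟩ := Nat.sInf_mem h
    rw [← hcard]
    exact S.card_le_univ.trans_eq rfl
  · rw [Set.not_nonempty_iff_eq_empty.mp h, Nat.sInf_empty]
    exact Nat.zero_le _

lemma cycleDegeneracy_bddAbove (A : V → V → Prop) :
    BddAbove { m | ∃ (U : Finset V) (E : Finset (V × V)),
      IsSubdigraph A U E ∧ ∀ v ∈ U, m ≤ cycleDegree (arcRel E) v } := by
  refine ⟨Fintype.card V, ?_⟩
  rintro m ⟨U, E, ⟨⟨v₀, hv₀⟩, -⟩, h⟩
  exact (h v₀ hv₀).trans (cycleDegree_le_card _ _)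

/-- degeneracy extraction -/
lemma exists_low_vertex {U : Finset V} (hU : U.Nonempty)
    (hnl : ∀ u, ¬ relF A U u u) :
    ∃ v ∈ U, ∃ S : Finset V, v ∉ S ∧ S.card ≤ cycleDegeneracy A ∧
      HitsCyclesThrough (relF A U) v S := by
  classical
  set E : Finset (V × V) := (U ×ˢ U).filter (fun p => A p.1 p.2) with hE
  have harc : ∀ a b, arcRel E a b ↔ relF A U a b := by
    intro a b
    simp only [arcRel, hE, Finset.mem_filter, Finset.mem_product, relF]
    tauto
  by_contra hcon
  push_neg at hcon
  -- every vertex of U has cycleDegree ≥ δ + 1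
  have hdeg : ∀ v ∈ U, cycleDegeneracy A + 1 ≤ cycleDegree (arcRel E) v := by
    intro v hv
    set T := { n | ∃ S : Finset V, S.card = n ∧ v ∉ S ∧ HitsCyclesThrough (arcRel E) v S }
      with hT
    have hTne : T.Nonempty := by
      refine ⟨(Finset.univ.erase v).card, Finset.univ.erase v, rfl, by simp, ?_⟩
      intro l hl hvl
      by_cases hex : ∃ u ∈ l, u ≠ v
      · obtain ⟨u, hul, huv⟩ := hex
        exact ⟨u, hul, Finset.mem_erase.mpr ⟨huv, Finset.mem_univ _⟩⟩
      · push_neg at hex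
        have hl1 : l = [v] := by
          obtain ⟨h1, h2, -, -⟩ := hl
          cases l with
          | nil => exact absurd rfl h1
          | cons a l' =>
            have hav : a = v := hex a (by simp)
            cases l' with
            | nil => rw [hav]
            | cons b l'' =>
              have hbv : b = v := hex b (by simp)
              rw [hav, hbv] at h2
              simp at h2
        obtain ⟨-, -, -, h4⟩ := hl
        rw [hl1] at h4
        have : arcRel E v v := h4 v (by simp) v (by simp)
        exact absurd ((harc v v).mp this) (hnl v)
    obtain ⟨S, hScard, hvS, hhits⟩ := Nat.sInf_mem hTne
    have hcd : cycleDegree (arcRel E) v = sInf T := rfl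
    by_contra hlt
    push_neg at hlt
    have hSle : S.card ≤ cycleDegeneracy A := by omega
    exact hcon v hv S hvS hSle (hits_congr harc hhits)
  -- so δ+1 is in the degeneracy set
  have hmem : cycleDegeneracy A + 1 ∈ { m | ∃ (U : Finset V) (E : Finset (V × V)),
      IsSubdigraph A U E ∧ ∀ v ∈ U, m ≤ cycleDegree (arcRel E) v } := by
    refine ⟨U, E, ⟨hU, ?_⟩, hdeg⟩
    intro p hp
    rw [hE, Finset.mem_filter, Finset.mem_product] at hp
    exact ⟨hp.2, hp.1.1, hp.1.2⟩
  have := le_csSup (cycleDegeneracy_bddAbove A) hmem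
  unfold cycleDegeneracy at this
  omega

end PartC

section PartD
variable [DecidableEq V] {k : ℕ} {u : V}

@[simp] lemma countRecol_nil : countRecol u ([] : List (V → Fin k)) = 0 := rfl

@[simp] lemma countRecol_single (x : V → Fin k) : countRecol u [x] = 0 := rfl

lemma countRecol_cons₂ (x y : V → Fin k) (l : List (V → Fin k)) :
    countRecol u (x :: y :: l) = countRecol u (y :: l) + (if x u ≠ y u then 1 else 0) := by
  unfold countRecol
  simp only [List.tail_cons, List.zip_cons_cons, List.countP_cons]
  congr 1
  by_cases h : x u = y u <;> simp [h]

lemma countRecol_append (x : V → Fin k) (l₁ l₂ : List (V → Fin k)) :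
    countRecol u (x :: (l₁ ++ l₂)) =
      countRecol u (x :: l₁) + countRecol u ((x :: l₁).getLast (List.cons_ne_nil _ _) :: l₂) := by
  induction l₁ generalizing x with
  | nil => simp
  | cons y l₁ ih =>
    have h1 : (x :: y :: l₁).getLast (List.cons_ne_nil _ _)
        = (y :: l₁).getLast (List.cons_ne_nil _ _) := by
      rw [List.getLast_cons]
    rw [List.cons_append, countRecol_cons₂, ih y, countRecol_cons₂, h1]
    ring

lemma countRecol_eq_card_filter (L : List (V → Fin k)) (d : V → Fin k) :
    countRecol u L = ((Finset.range (L.length - 1)).filter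
      (fun s => L.getD (s+1) d u ≠ L.getD s d u)).card := by
  induction L with
  | nil => simp
  | cons x L ih =>
    cases L with
    | nil => simp
    | cons y L' =>
      rw [countRecol_cons₂, ih]
      have hlen : (x :: y :: L').length - 1 = ((y :: L').length - 1) + 1 := by
        simp
      rw [hlen, Finset.card_filter, Finset.card_filter, Finset.sum_range_succ']
      congr 1
      · simp only [List.getD_cons_succ, List.getD_cons_zero]
        by_cases h : x u = y u
        · simp [h]
        · simp [h, Ne.symm h]


end PartD

section PartF1
variable [DecidableEq V] {k : ℕ} {v : V}

lemma update_exists_unique_ne (φ : V → Fin k) {x x' : Fin k} (h : x ≠ x') :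
    ∃! w, Function.update φ v x w ≠ Function.update φ v x' w := by
  refine ⟨v, by simp [h], ?_⟩
  intro w hw
  by_contra hne
  rw [Function.update_of_ne hne, Function.update_of_ne hne] at hw
  exact hw rfl

lemma update_exists_unique_ne' {φ φ' : V → Fin k} (h : ∃! u, φ u ≠ φ' u)
    (hv : φ v = φ' v) (c : Fin k) :
    ∃! u, Function.update φ v c u ≠ Function.update φ' v c u := by
  obtain ⟨u, hu, huniq⟩ := h
  have huv : u ≠ v := by rintro rfl; exact hu hv
  refine ⟨u, ?_, ?_⟩
  · show Function.update φ v c u ≠ Function.update φ' v c u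
    rw [Function.update_of_ne huv, Function.update_of_ne huv]; exact hu
  · intro w hw
    have hwv : w ≠ v := by rintro rfl; simp at hw
    rw [Function.update_of_ne hwv, Function.update_of_ne hwv] at hw
    exact huniq w hw

lemma chain_append' {α : Type*} {R : α → α → Prop} {l l' : List α} {a : α}
    (h1 : List.Chain R a l)
    (h2 : List.Chain R ((a :: l).getLast (List.cons_ne_nil _ _)) l') :
    List.Chain R a (l ++ l') := by
  induction l generalizing a with
  | nil => simpa using h2
  | cons b l ih =>
    obtain ⟨hab, h1'⟩ := List.isChain_cons_cons.mp h1
    refine List.Chain.cons hab (ih h1' ?_)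
    rwa [List.getLast_cons (List.cons_ne_nil _ _)] at h2

lemma getLast_cons_append {α : Type*} (x : α) (l l' : List α) :
    (x :: (l ++ l')).getLast (List.cons_ne_nil _ _) =
      ((x :: l).getLast (List.cons_ne_nil _ _) :: l').getLast (List.cons_ne_nil _ _) := by
  induction l generalizing x with
  | nil => rfl
  | cons b l ih =>
    rw [List.cons_append, List.getLast_cons (List.cons_ne_nil _ _), ih b,
      List.getLast_cons (List.cons_ne_nil _ _)]

/-- assembling a path from consecutive blocks -/
lemma chain_blocks {R : (V → Fin k) → (V → Fin k) → Prop}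
    (E : ℕ → V → Fin k) (B : ℕ → List (V → Fin k)) (n : ℕ)
    (hne : ∀ i < n, B i ≠ [])
    (hchain : ∀ i < n, List.Chain R (E i) (B i))
    (hlast : ∀ i < n, (E i :: B i).getLast (List.cons_ne_nil _ _) = E (i + 1)) :
    List.Chain R (E 0) ((List.range n).flatMap B) ∧
    ((E 0 :: (List.range n).flatMap B).getLast (List.cons_ne_nil _ _) = E n) ∧
    (∀ u, countRecol u (E 0 :: (List.range n).flatMap B) =
      ∑ i ∈ Finset.range n, countRecol u (E i :: B i)) ∧
    ((List.range n).flatMap B).length = ∑ i ∈ Finset.range n, (B i).length := by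
  induction n with
  | zero => simp [List.Chain.nil]
  | succ n ih =>
    obtain ⟨ih1, ih2, ih3, ih4⟩ := ih (fun i hi => hne i (by omega))
      (fun i hi => hchain i (by omega)) (fun i hi => hlast i (by omega))
    have hbind : (List.range (n + 1)).flatMap B = (List.range n).flatMap B ++ B n := by
      rw [List.range_succ]
      simp [List.flatMap_append]
    refine ⟨?_, ?_, ?_, ?_⟩
    · rw [hbind]
      apply chain_append' ih1
      rw [ih2]
      exact hchain n (by omega)
    · rw [hbind, getLast_cons_append, ih2, hlast n (by omega)]
    · intro u
      rw [hbind, countRecol_append, ih3, ih2, Finset.sum_range_succ]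
    · rw [hbind, List.length_append, ih4, Finset.sum_range_succ]

end PartF1

section PartE

/-- abstract furthest-in-future scheduling lemma -/
lemma sched (k D : ℕ) (hk : 2 * (D + 1) ≤ k) (F : ℕ → Finset (Fin k)) (m : ℕ)
    (hcard : ∀ s, (F s).card ≤ D) (hstep : ∀ s, 1 ≤ s → (F s \ F (s - 1)).card ≤ 1) :
    ∀ N t, m - t ≤ N → 1 ≤ t → t ≤ m →
    ∃ y : ℕ → Fin k,
      (∀ s, t ≤ s → s ≤ m → y s ∉ F s) ∧
      (∀ s, t < s → s ≤ m → y s ≠ y (s - 1) → y s ∉ F (s - 1)) ∧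
      (y t ∉ F (t - 1)) ∧
      (∀ s, s ≤ t → y s = y t) ∧
      ((((Finset.Ioc t m).filter (fun s => y s ≠ y (s - 1))).card = 0) ∨
        (D + 1) * ((((Finset.Ioc t m).filter (fun s => y s ≠ y (s - 1))).card) - 1) + k ≤
          (((Finset.Ioc t m).filter (fun s => F s ≠ F (s - 1))).card) + (F (t - 1) ∪ F t).card) := by
  intro N
  induction N with
  | zero =>
    intro t ht0 ht1 ht2
    -- t = m, no future: pick any colour outside F (t-1) ∪ F t
    have htm : t = m := by omega
    have hGcard : (F (t - 1) ∪ F t).card ≤ D + 1 := by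
      calc (F (t - 1) ∪ F t).card = (F (t - 1) ∪ (F t \ F (t - 1))).card := by
            rw [Finset.union_sdiff_self_eq_union]
          _ ≤ (F (t - 1)).card + (F t \ F (t - 1)).card := Finset.card_union_le _ _
          _ ≤ D + 1 := by have := hcard (t - 1); have := hstep t ht1; omega
    have hCne : (Finset.univ \ (F (t - 1) ∪ F t)).Nonempty := by
      rw [← Finset.card_pos, Finset.card_sdiff_of_subset (Finset.subset_univ _)]
      have : (Finset.univ : Finset (Fin k)).card = k := by simp
      omega
    obtain ⟨y₀, hy₀⟩ := hCne
    rw [Finset.mem_sdiff, Finset.mem_union] at hy₀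
    refine ⟨fun _ => y₀, ?_, ?_, ?_, fun _ _ => rfl, Or.inl ?_⟩
    · intro s hs1 hs2
      have : s = t := by omega
      subst this
      tauto
    · intro s hs1 hs2
      omega
    · tauto
    · rw [Finset.card_eq_zero, Finset.filter_eq_empty_iff]
      intro s _
      simp
  | succ N ih =>
    intro t ht0 ht1 ht2
    have hGcard : (F (t - 1) ∪ F t).card ≤ D + 1 := by
      calc (F (t - 1) ∪ F t).card = (F (t - 1) ∪ (F t \ F (t - 1))).card := by
            rw [Finset.union_sdiff_self_eq_union]
          _ ≤ (F (t - 1)).card + (F t \ F (t - 1)).card := Finset.card_union_le _ _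
          _ ≤ D + 1 := by have := hcard (t - 1); have := hstep t ht1; omega
    set G := F (t - 1) ∪ F t with hG
    have hCne : (Finset.univ \ G).Nonempty := by
      rw [← Finset.card_pos, Finset.card_sdiff_of_subset (Finset.subset_univ _)]
      have : (Finset.univ : Finset (Fin k)).card = k := by simp
      omega
    -- next-entry value
    classical
    set val : Fin k → ℕ := fun c =>
      if h : ((Finset.Ioc t m).filter (fun s => c ∈ F s)).Nonempty
      then (((Finset.Ioc t m).filter (fun s => c ∈ F s)).min' h) else m + 1 with hval
    obtain ⟨y₀, hy₀C, hy₀max⟩ := Finset.exists_max_image (Finset.univ \ G) val hCne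
    have hy₀G : y₀ ∉ G := (Finset.mem_sdiff.mp hy₀C).2
    by_cases hent : ((Finset.Ioc t m).filter (fun s => y₀ ∈ F s)).Nonempty
    · -- recursive case
      set s' := ((Finset.Ioc t m).filter (fun s => y₀ ∈ F s)).min' hent with hs'
      have hs'mem := ((Finset.Ioc t m).filter (fun s => y₀ ∈ F s)).min'_mem hent
      rw [Finset.mem_filter, Finset.mem_Ioc] at hs'mem
      obtain ⟨⟨hts', hs'm⟩, hy₀s'⟩ := hs'mem
      have hs'min : ∀ s, t < s → s < s' → y₀ ∉ F s := by
        intro s hs1 hs2 hmem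
        have : s' ≤ s := Finset.min'_le _ s (by
          rw [Finset.mem_filter, Finset.mem_Ioc]
          exact ⟨⟨hs1, by omega⟩, hmem⟩)
        omega
      -- apply IH at s'
      obtain ⟨y', ha', hb', hc', hd', he'⟩ := ih s' (by omega) (by omega) hs'm
      set y : ℕ → Fin k := fun s => if s < s' then y₀ else y' s with hy
      have hyval : ∀ s, s < s' → y s = y₀ := by intro s hs; simp [hy, hs]
      have hyval' : ∀ s, s' ≤ s → y s = y' s := by
        intro s hs; simp [hy, Nat.not_lt.mpr hs]
      have hys' : y s' = y' s' := hyval' s' le_rfl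
      have hchg : ∀ s, t < s → s ≤ m → (y s ≠ y (s - 1) ↔
          (s = s' ∨ (s' < s ∧ y' s ≠ y' (s - 1)))) := by
        intro s hs1 hs2
        rcases lt_trichotomy s s' with h | h | h
        · rw [hyval s h, hyval (s - 1) (by omega)]
          simp only [ne_eq, not_true_eq_false, false_iff, not_or]
          refine ⟨by omega, ?_⟩
          rintro ⟨h1, -⟩
          omega
        · rw [h, hys', hyval (s' - 1) (by omega)]
          have hns : y' s' ∉ F s' := ha' s' le_rfl hs'm
          constructor
          · intro _; exact Or.inl rfl
          · intro _ heq; rw [heq] at hns; exact hns hy₀s'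
        · rw [hyval' s (by omega), hyval' (s - 1) (by omega)]
          constructor
          · intro hne; exact Or.inr ⟨h, hne⟩
          · rintro (h1 | h2); omega; exact h2.2
      refine ⟨y, ?_, ?_, ?_, ?_, ?_⟩
      · -- (a)
        intro s hs1 hs2
        rcases lt_or_ge s s' with h | h
        · rw [hyval s h]
          rcases eq_or_lt_of_le hs1 with h1 | h1
          · subst h1
            intro hmem
            exact hy₀G (by rw [hG, Finset.mem_union]; exact Or.inr hmem)
          · exact hs'min s h1 h
        · rw [hyval' s h]; exact ha' s h hs2
      · -- (b)
        intro s hs1 hs2 hne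
        rw [hchg s hs1 hs2] at hne
        rcases hne with rfl | ⟨h1, h2⟩
        · rw [hys']; exact hc'
        · rw [hyval' s (by omega)]
          exact hb' s h1 hs2 h2
      · -- (c)
        rw [hyval t hts']
        intro hmem
        exact hy₀G (by rw [hG, Finset.mem_union]; exact Or.inl hmem)
      · -- (d)
        intro s hs
        rw [hyval s (by omega), hyval t hts']
      · -- (e) the count
        right
        -- the set of changes of y in (t, m] is {s'} ∪ changes of y' in (s', m]
        have hsplit : (Finset.Ioc t m).filter (fun s => y s ≠ y (s - 1)) =
            insert s' ((Finset.Ioc s' m).filter (fun s => y' s ≠ y' (s - 1))) := by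
          ext s
          simp only [Finset.mem_filter, Finset.mem_Ioc, Finset.mem_insert]
          constructor
          · rintro ⟨⟨h1, h2⟩, h3⟩
            rw [hchg s h1 h2] at h3
            rcases h3 with h3 | h3
            · exact Or.inl h3
            · exact Or.inr ⟨⟨h3.1, h2⟩, h3.2⟩
          · rintro (rfl | ⟨⟨h1, h2⟩, h3⟩)
            · refine ⟨⟨hts', hs'm⟩, ?_⟩
              rw [hchg s' hts' hs'm]
              exact Or.inl rfl
            · refine ⟨⟨by omega, h2⟩, ?_⟩
              rw [hchg s (by omega) h2]
              exact Or.inr ⟨h1, h3⟩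
        have hnotmem : s' ∉ (Finset.Ioc s' m).filter (fun s => y' s ≠ y' (s - 1)) := by
          simp [Finset.mem_filter]
        rw [hsplit, Finset.card_insert_of_notMem hnotmem]
        -- event counting : each colour of univ \ G has first entry in (t, s']
        have hinj : k ≤ ((Finset.Ioc t s').filter (fun s => F s ≠ F (s - 1))).card + G.card := by
          have hentry : ∀ c ∈ Finset.univ \ G,
              ((Finset.Ioc t m).filter (fun s => c ∈ F s)).Nonempty := by
            intro c hc
            by_contra hemp
            have h1 : val c = m + 1 := by rw [hval]; simp only [dif_neg hemp]
            have hle := hy₀max c hc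
            have h2 : val y₀ = s' := by rw [hval]; simp only [dif_pos hent, hs']
            omega
          have hece : ∀ c ∈ Finset.univ \ G, t < val c ∧ val c ≤ s' ∧ c ∈ F (val c) ∧ c ∉ F (val c - 1) := by
            intro c hc
            have hne := hentry c hc
            have hmm := ((Finset.Ioc t m).filter (fun s => c ∈ F s)).min'_mem hne
            rw [Finset.mem_filter, Finset.mem_Ioc] at hmm
            have hece1 : val c = ((Finset.Ioc t m).filter (fun s => c ∈ F s)).min' hne := by
              rw [hval]; simp only [dif_pos hne]
            have hecle : val c ≤ s' := by
              have h1 := hy₀max c hc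
              have hey : val y₀ = s' := by rw [hval]; simp only [dif_pos hent, hs']
              omega
            refine ⟨by omega, hecle, by rw [hece1]; exact hmm.2, ?_⟩
            intro hmem
            rcases Nat.eq_or_lt_of_le (Nat.succ_le_of_lt hmm.1.1) with h1 | h1
            · -- e c = t + 1, then e c - 1 = t, c ∉ F t since c ∉ G
              have : val c - 1 = t := by omega
              rw [this] at hmem
              exact (Finset.mem_sdiff.mp hc).2 (by rw [hG, Finset.mem_union]; exact Or.inr hmem)
            · -- e c - 1 is in the filter set, contradicting minimality
              have : ((Finset.Ioc t m).filter (fun s => c ∈ F s)).min' hne ≤ val c - 1 := by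
                apply Finset.min'_le
                rw [Finset.mem_filter, Finset.mem_Ioc]
                refine ⟨⟨by omega, by omega⟩, hmem⟩
              omega
          have hmap : ∀ c ∈ Finset.univ \ G,
              val c ∈ (Finset.Ioc t s').filter (fun s => F s ≠ F (s - 1)) := by
            intro c hc
            obtain ⟨h1, h2, h3, h4⟩ := hece c hc
            rw [Finset.mem_filter, Finset.mem_Ioc]
            refine ⟨⟨h1, h2⟩, ?_⟩
            intro heq
            rw [heq] at h3
            exact h4 h3
          have hinjOn : Set.InjOn val ↑(Finset.univ \ G) := by
            intro c₁ hc₁ c₂ hc₂ heq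
            obtain ⟨-, -, h31, h41⟩ := hece c₁ (by simpa using hc₁)
            obtain ⟨-, -, h32, h42⟩ := hece c₂ (by simpa using hc₂)
            have hsd := hstep (val c₁) (by
              obtain ⟨hh, -, -, -⟩ := hece c₁ (by simpa using hc₁); omega)
            rw [Finset.card_le_one] at hsd
            apply hsd c₁ (Finset.mem_sdiff.mpr ⟨h31, h41⟩) c₂
            rw [heq]
            exact Finset.mem_sdiff.mpr ⟨h32, h42⟩
          have := Finset.card_le_card_of_injOn val hmap hinjOn
          rw [Finset.card_sdiff_of_subset (Finset.subset_univ _)] at this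
          have hku : (Finset.univ : Finset (Fin k)).card = k := by simp
          have hGk : G.card ≤ k := by
            have := Finset.card_le_univ G
            omega
          omega
        -- split events over (t, m] = (t, s'] ∪ (s', m]
        have hevsplit : ((Finset.Ioc t m).filter (fun s => F s ≠ F (s - 1))).card =
            ((Finset.Ioc t s').filter (fun s => F s ≠ F (s - 1))).card +
            ((Finset.Ioc s' m).filter (fun s => F s ≠ F (s - 1))).card := by
          rw [← Finset.card_union_of_disjoint, ← Finset.filter_union,
            Finset.Ioc_union_Ioc_eq_Ioc (by omega) hs'm]
          exact Finset.disjoint_filter_filter (Finset.disjoint_left.mpr (fun a ha hb => by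
            rw [Finset.mem_Ioc] at ha hb; omega))
        -- now conclude
        have hG'card : (F (s' - 1) ∪ F s').card ≤ D + 1 := by
          calc (F (s' - 1) ∪ F s').card = (F (s' - 1) ∪ (F s' \ F (s' - 1))).card := by
                rw [Finset.union_sdiff_self_eq_union]
              _ ≤ (F (s' - 1)).card + (F s' \ F (s' - 1)).card := Finset.card_union_le _ _
              _ ≤ D + 1 := by have := hcard (s' - 1); have := hstep s' (by omega); omega
        rcases he' with he0 | heK
        · -- no further changes
          rw [he0]
          simp only [Nat.add_sub_cancel, Nat.mul_zero, Nat.zero_add]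
          omega
        · -- further changes
          rcases Nat.eq_zero_or_pos ((Finset.Ioc s' m).filter (fun s => y' s ≠ y' (s - 1))).card
            with hc0 | hcpos
          · rw [hc0] at heK ⊢
            simp only [Nat.zero_sub, Nat.mul_zero, Nat.zero_add] at heK
            simp only [Nat.add_sub_cancel, Nat.mul_one]
            omega
          · obtain ⟨c'', hc''⟩ : ∃ c'',
                ((Finset.Ioc s' m).filter (fun s => y' s ≠ y' (s - 1))).card = c'' + 1 :=
              ⟨((Finset.Ioc s' m).filter (fun s => y' s ≠ y' (s - 1))).card - 1, by omega⟩
            rw [hc''] at heK ⊢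
            simp only [Nat.add_sub_cancel] at heK ⊢
            rw [Nat.mul_succ]
            have hX : ∀ X : ℕ, X + k ≤ (((Finset.Ioc s' m).filter
                (fun s => F s ≠ F (s - 1))).card + (F (s' - 1) ∪ F s').card) →
                X + (D + 1) + k ≤
                  ((Finset.Ioc t m).filter (fun s => F s ≠ F (s - 1))).card + G.card := by
              intro X hXh
              omega
            exact hX _ heK
    · -- terminal case: y₀ never enters F again
      refine ⟨fun _ => y₀, ?_, ?_, ?_, fun _ _ => rfl, Or.inl ?_⟩
      · intro s hs1 hs2
        rcases eq_or_lt_of_le hs1 with h1 | h1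
        · subst h1
          intro hmem
          exact hy₀G (by rw [hG, Finset.mem_union]; exact Or.inr hmem)
        · intro hmem
          exact hent ⟨s, by rw [Finset.mem_filter, Finset.mem_Ioc]; exact ⟨⟨h1, hs2⟩, hmem⟩⟩
      · intro s _ _ h; exact absurd rfl h
      · intro hmem
        exact hy₀G (by rw [hG, Finset.mem_union]; exact Or.inl hmem)
      · rw [Finset.card_eq_zero, Finset.filter_eq_empty_iff]
        intro s _
        simp
end PartE

section PartF2
variable [Fintype V] [DecidableEq V] {A : V → V → Prop} {k : ℕ}

lemma lift_path {U : Finset V} {v : V} {β : V → Fin k} {m : ℕ}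
    {ψ : ℕ → V → Fin k} {yf : ℕ → Fin k}
    (hβ : IsDicolouring (relF A U) β)
    (hstep : ∀ s < m, ∃! u, ψ s u ≠ ψ (s + 1) u)
    (hvstep : ∀ s < m, ψ s v = ψ (s + 1) v)
    (hup : ∀ x : Fin k, Function.update (ψ m) v x = Function.update β v x)
    (R1 : ∀ s ≤ m, IsDicolouring (relF A U) (Function.update (ψ s) v (yf s)))
    (R2 : ∀ s, 1 ≤ s → s ≤ m → yf s ≠ yf (s - 1) →
      IsDicolouring (relF A U) (Function.update (ψ (s - 1)) v (yf s))) :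
    ∃ l : List (V → Fin k),
      List.Chain (DicolStep (relF A U)) (Function.update (ψ 0) v (yf 0)) l ∧
      (Function.update (ψ 0) v (yf 0) :: l).getLast (List.cons_ne_nil _ _) = β ∧
      (∀ w, w ≠ v → countRecol w (Function.update (ψ 0) v (yf 0) :: l) =
        ((Finset.range m).filter (fun s => ψ (s + 1) w ≠ ψ s w)).card) ∧
      countRecol v (Function.update (ψ 0) v (yf 0) :: l) =
        ((Finset.range m).filter (fun s => yf (s + 1) ≠ yf s)).card +
          (if yf m = β v then 0 else 1) ∧
      l.length = m + countRecol v (Function.update (ψ 0) v (yf 0) :: l) := by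
  classical
  set E : ℕ → V → Fin k := fun i => Function.update (ψ i) v (yf i) with hE
  set B : ℕ → List (V → Fin k) := fun i =>
    (if yf (i + 1) ≠ yf i then [Function.update (ψ i) v (yf (i + 1))] else [])
      ++ [E (i + 1)] with hB
  have hR2' : ∀ i < m, yf (i + 1) ≠ yf i →
      IsDicolouring (relF A U) (Function.update (ψ i) v (yf (i + 1))) := by
    intro i hi hne
    have := R2 (i + 1) (by omega) (by omega) (by simpa using hne)
    simpa using this
  have hstep' : ∀ i < m, ∀ c : Fin k,
      ∃! u, Function.update (ψ i) v c u ≠ Function.update (ψ (i + 1)) v c u :=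
    fun i hi c => update_exists_unique_ne' (hstep i hi) (hvstep i hi) c
  have hbne : ∀ i < m, B i ≠ [] := by
    intro i _
    rw [hB]
    simp
  have hbchain : ∀ i < m, List.Chain (DicolStep (relF A U)) (E i) (B i) := by
    intro i hi
    rw [hB]
    by_cases hy : yf (i + 1) = yf i
    · simp only [hy, ne_eq, not_true_eq_false, if_neg, ite_false, List.nil_append,
        not_false_eq_true]
      refine List.Chain.cons ?_ List.Chain.nil
      refine ⟨R1 i (by omega), R1 (i + 1) (by omega), ?_⟩
      have := hstep' i hi (yf i)
      rw [hE]
      simp only [hy]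
      exact this
    · simp only [hy, ne_eq, not_false_eq_true, if_pos, ite_true, List.cons_append,
        List.nil_append]
      refine List.Chain.cons ?_ (List.Chain.cons ?_ List.Chain.nil)
      · refine ⟨R1 i (by omega), hR2' i hi hy, ?_⟩
        exact update_exists_unique_ne (ψ i) (fun h => hy h.symm)
      · refine ⟨hR2' i hi hy, R1 (i + 1) (by omega), ?_⟩
        exact hstep' i hi (yf (i + 1))
  have hblast : ∀ i < m, (E i :: B i).getLast (List.cons_ne_nil _ _) = E (i + 1) := by
    intro i _
    rw [hB]
    by_cases hy : yf (i + 1) = yf i <;> simp [hy]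
  obtain ⟨hc, hl, hcnt, hlen⟩ := chain_blocks E B m hbne hbchain hblast
  -- per-block counts
  have hbc1 : ∀ w, w ≠ v → ∀ i, countRecol w (E i :: B i) =
      if ψ (i + 1) w ≠ ψ i w then 1 else 0 := by
    intro w hw i
    have h1 : E i w = ψ i w := Function.update_of_ne hw _ _
    have h2 : E (i + 1) w = ψ (i + 1) w := Function.update_of_ne hw _ _
    rw [hB]
    by_cases hy : yf (i + 1) = yf i
    · simp only [hy, ne_eq, not_true_eq_false, ite_false, List.nil_append]
      rw [countRecol_cons₂, countRecol_single, h1, h2]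
      rcases eq_or_ne (ψ (i + 1) w) (ψ i w) with h | h
      · simp [h]
      · simp [h, Ne.symm h]
    · simp only [hy, ne_eq, not_false_eq_true, ite_true, List.cons_append, List.nil_append]
      rw [countRecol_cons₂, countRecol_cons₂, countRecol_single]
      have h3 : Function.update (ψ i) v (yf (i + 1)) w = ψ i w := Function.update_of_ne hw _ _
      rw [h1, h2, h3]
      rcases eq_or_ne (ψ (i + 1) w) (ψ i w) with h | h
      · simp [h]
      · simp [h, Ne.symm h]
  have hbc2 : ∀ i, countRecol v (E i :: B i) = if yf (i + 1) ≠ yf i then 1 else 0 := by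
    intro i
    have h1 : E i v = yf i := Function.update_self _ _ _
    have h2 : E (i + 1) v = yf (i + 1) := Function.update_self _ _ _
    rw [hB]
    by_cases hy : yf (i + 1) = yf i
    · simp only [hy, ne_eq, not_true_eq_false, ite_false, List.nil_append]
      rw [countRecol_cons₂, countRecol_single, h1, h2, hy]
      simp
    · simp only [hy, ne_eq, not_false_eq_true, ite_true, List.cons_append, List.nil_append]
      rw [countRecol_cons₂, countRecol_cons₂, countRecol_single]
      have h3 : Function.update (ψ i) v (yf (i + 1)) v = yf (i + 1) := Function.update_self _ _ _
      rw [h1, h2, h3]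
      simp [hy, fun hh => hy (Eq.symm hh)]
      exact fun hh => hy (Eq.symm hh)
  -- the final segment
  set fin : List (V → Fin k) := if yf m = β v then [] else [β] with hfin
  have hEm : E m = Function.update β v (yf m) := by rw [hE]; exact hup (yf m)
  have hfinchain : List.Chain (DicolStep (relF A U)) (E m) fin := by
    rw [hfin]
    by_cases hy : yf m = β v
    · simp only [hy, ite_true]
      exact List.Chain.nil
    · simp only [hy, ite_false]
      refine List.Chain.cons ?_ List.Chain.nil
      refine ⟨R1 m le_rfl, hβ, ?_⟩
      rw [hEm]
      have := update_exists_unique_ne (v := v) β hy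
      rwa [Function.update_eq_self] at this
  refine ⟨(List.range m).flatMap B ++ fin, ?_, ?_, ?_, ?_, ?_⟩
  · exact chain_append' hc (by rw [hl]; exact hfinchain)
  · rw [getLast_cons_append, hl]
    rw [hfin]
    by_cases hy : yf m = β v
    · simp only [hy, ite_true]
      have hEmb : E m = β := by rw [hEm, hy, Function.update_eq_self]
      exact hEmb
    · simp only [hy, ite_false]
      rfl
  · intro w hw
    rw [countRecol_append, hcnt w, hl]
    have hfi : countRecol w (E m :: fin) = 0 := by
      rw [hfin]
      by_cases hy : yf m = β v
      · simp only [hy, ite_true]; rfl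
      · simp only [hy, ite_false]
        rw [countRecol_cons₂, countRecol_single, hEm, Function.update_of_ne hw]
        simp
    rw [hfi]
    have : ∀ i ∈ Finset.range m, countRecol w (E i :: B i)
        = if ψ (i + 1) w ≠ ψ i w then 1 else 0 := fun i _ => hbc1 w hw i
    rw [Finset.sum_congr rfl this, ← Finset.card_filter]
    simp
  · rw [countRecol_append, hcnt v, hl]
    have hfi : countRecol v (E m :: fin) = if yf m = β v then 0 else 1 := by
      rw [hfin]
      by_cases hy : yf m = β v
      · simp only [hy, ite_true]; rfl
      · simp only [hy, ite_false]
        rw [countRecol_cons₂, countRecol_single, hEm, Function.update_self]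
        simp [hy]
    rw [hfi]
    have : ∀ i ∈ Finset.range m, countRecol v (E i :: B i)
        = if yf (i + 1) ≠ yf i then 1 else 0 := fun i _ => hbc2 i
    rw [Finset.sum_congr rfl this, ← Finset.card_filter]
  · rw [List.length_append, countRecol_append, hcnt v, hl, hlen]
    have hbl : ∀ i ∈ Finset.range m, (B i).length =
        (if yf (i + 1) ≠ yf i then 1 else 0) + 1 := by
      intro i _
      rw [hB]
      by_cases hy : yf (i + 1) = yf i <;> simp [hy]
    rw [Finset.sum_congr rfl hbl]
    have hfl : fin.length = countRecol v (E m :: fin) := by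
      rw [hfin]
      by_cases hy : yf m = β v
      · simp only [hy, ite_true]; rfl
      · simp only [hy, ite_false]
        rw [countRecol_cons₂, countRecol_single, hEm, Function.update_self]
        simp [hy]
    rw [hfl, Finset.sum_add_distrib, Finset.sum_const, smul_eq_mul, mul_one]
    have : ∀ i ∈ Finset.range m, (if yf (i + 1) ≠ yf i then 1 else 0) =
        countRecol v (E i :: B i) := fun i _ => (hbc2 i).symm
    rw [Finset.sum_congr rfl this, Finset.card_range]
    ring

end PartF2

section PartG
variable [Fintype V] [DecidableEq V]

lemma card_filter_range_succ_eq_Icc (m : ℕ) (p : ℕ → Prop) [DecidablePred p] :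
    ((Finset.range m).filter (fun s => p (s + 1))).card = ((Finset.Icc 1 m).filter p).card := by
  have himg : Finset.Icc 1 m = (Finset.range m).image (· + 1) := by
    ext a
    simp only [Finset.mem_Icc, Finset.mem_image, Finset.mem_range]
    constructor
    · rintro ⟨h1, h2⟩; exact ⟨a - 1, by omega, by omega⟩
    · rintro ⟨b, hb, rfl⟩; omega
  rw [himg, Finset.filter_image, Finset.card_image_of_injective _ (fun a b h => by omega)]

lemma main_aux (A : V → V → Prop) (k : ℕ) (hk : 2 * (cycleDegeneracy A + 1) ≤ k)
    (U : Finset V) :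
    ∀ α β : V → Fin k, IsDicolouring (relF A U) α → IsDicolouring (relF A U) β →
      (∀ w, w ∉ U → α w = β w) →
      ∃ l : List (V → Fin k),
        List.Chain (DicolStep (relF A U)) α l ∧
        (α :: l).getLast (List.cons_ne_nil _ _) = β ∧
        (∀ w : V, countRecol w (α :: l) ≤ if w ∈ U then cycleDegeneracy A + 1 else 0) ∧
        l.length ≤ (cycleDegeneracy A + 1) * U.card := by
  induction U using Finset.strongInductionOn with
  | _ U IH =>
  intro α β hα hβ hagree
  classical
  rcases U.eq_empty_or_nonempty with rfl | hUne
  · have hab : α = β := funext (fun w => hagree w (by simp))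
    subst hab
    exact ⟨[], List.Chain.nil, rfl, fun w => by simp, by simp⟩
  -- main case
  set δ := cycleDegeneracy A with hδ
  obtain ⟨v, hvU, S, hvS, hScard, hS⟩ := exists_low_vertex hUne (no_loop_of_dicolouring hα)
  set U' := U.erase v with hU'
  have hss : U' ⊂ U := Finset.erase_ssubset hvU
  have hsub : U' ⊆ U := Finset.erase_subset _ _
  have hαU' : IsDicolouring (relF A U') α := dicolouring_mono (relF_mono hsub) hα
  have hβU' : IsDicolouring (relF A U') β := dicolouring_mono (relF_mono hsub) hβ
  set β' := Function.update β v (α v) with hβ'def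
  have hβ' : IsDicolouring (relF A U') β' := dicolouring_update_erase _ hβU'
  have hagree' : ∀ w, w ∉ U' → α w = β' w := by
    intro w hw
    by_cases hwv : w = v
    · subst hwv; rw [hβ'def, Function.update_self]
    · rw [hβ'def, Function.update_of_ne hwv]
      exact hagree w (fun hwU => hw (Finset.mem_erase.mpr ⟨hwv, hwU⟩))
  obtain ⟨l₁, hch, hlast, hcnt, hlen1⟩ := IH U' hss α β' hαU' hβ' hagree'
  set m := l₁.length with hm
  set ψ : ℕ → V → Fin k := fun s => (α :: l₁).getD s β' with hψ
  have hψ0 : ψ 0 = α := rfl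
  have hψm : ∀ s, m ≤ s → ψ s = β' := by
    intro s hs
    rcases eq_or_lt_of_le hs with heq | h
    · show (α :: l₁).getD s β' = β'
      have hlen' : s < (α :: l₁).length := by simp only [List.length_cons]; omega
      have hidx : (⟨s, hlen'⟩ : Fin (α :: l₁).length) =
          ⟨(α :: l₁).length - 1, by simp⟩ := by
        ext
        simp only [List.length_cons]
        omega
      rw [List.getD_eq_getElem _ _ hlen', ← hlast, List.getLast_eq_getElem]
      exact congrArg (fun i : Fin _ => (α :: l₁).get i) hidx
    · show (α :: l₁).getD s β' = β'
      exact List.getD_eq_default _ _ (by simp only [List.length_cons]; omega)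
  have hstepm : ∀ s < m, DicolStep (relF A U') (ψ s) (ψ (s + 1)) := by
    replace hch := List.isChain_iff_getElem.mp hch
    have hget : ∀ i (h : i < m), ψ (i + 1) = l₁.get ⟨i, h⟩ := by
      intro i h
      rw [hψ]
      show l₁.getD i β' = _
      rw [List.getD_eq_getElem _ _ h]; rfl
    intro s hsm
    cases s with
    | zero =>
      rw [hψ0, hget 0 hsm]
      exact hch 0 (by simp; omega)
    | succ t =>
      rw [hget t (by omega), hget (t + 1) hsm]
      exact hch (t + 1) (by simp; omega)
  have hψdicol : ∀ s, IsDicolouring (relF A U') (ψ s) := by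
    intro s
    cases s with
    | zero => exact hαU'
    | succ t =>
      rcases le_or_gt (t + 1) m with hsm | hsm
      · exact (hstepm t (by omega)).2.1
      · rw [hψm (t + 1) (by omega)]; exact hβ'
  have hψv : ∀ s, ψ s v = α v := by
    have hvU'n : v ∉ U' := by simp [hU']
    have h0 := hcnt v
    rw [if_neg hvU'n, countRecol_eq_card_filter (α :: l₁) β', Nat.le_zero,
      Finset.card_eq_zero] at h0
    have hv0 : ∀ s < m, ψ (s + 1) v = ψ s v := by
      intro s hs
      by_contra hne
      have hmem : s ∈ (Finset.range ((α :: l₁).length - 1)).filter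
          (fun s => (α :: l₁).getD (s + 1) β' v ≠ (α :: l₁).getD s β' v) := by
        rw [Finset.mem_filter, Finset.mem_range]
        exact ⟨by simp only [List.length_cons]; omega, hne⟩
      rw [h0] at hmem
      simp at hmem
    intro s
    induction s with
    | zero => rfl
    | succ t iht =>
      rcases lt_or_ge t m with h | h
      · rw [hv0 t h, iht]
      · rw [hψm (t + 1) (by omega), hβ'def, Function.update_self]
  -- colours of S over time
  set F : ℕ → Finset (Fin k) := fun s => S.image (ψ s) with hF
  have hFcard : ∀ s, (F s).card ≤ δ := fun s => Finset.card_image_le.trans hScard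
  have hsafe : ∀ s x, x ∉ F s → IsDicolouring (relF A U) (Function.update (ψ s) v x) := by
    intro s x hx
    apply update_safe (hψdicol s) hS hvS
    intro u hu hc
    exact hx (by rw [hF]; exact Finset.mem_image.mpr ⟨u, hu, hc⟩)
  have hFstep : ∀ s, 1 ≤ s → (F s \ F (s - 1)).card ≤ 1 := by
    intro s hs1
    rcases le_or_gt s m with hsm | hsm
    · have hstep' := (hstepm (s - 1) (by omega)).2.2
      have hs1' : s - 1 + 1 = s := by omega
      rw [hs1'] at hstep'
      obtain ⟨u₀, hu₀, huniq⟩ := hstep'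
      have hsub1 : F s \ F (s - 1) ⊆ {ψ s u₀} := by
        intro c hc
        rw [Finset.mem_sdiff] at hc
        obtain ⟨u, huS, huc⟩ := Finset.mem_image.mp hc.1
        by_cases hu : ψ (s - 1) u ≠ ψ s u
        · rw [huniq u hu] at huc
          rw [Finset.mem_singleton, ← huc]
        · push_neg at hu
          exfalso
          exact hc.2 (Finset.mem_image.mpr ⟨u, huS, by rw [← hu] at huc; exact huc⟩)
      calc (F s \ F (s - 1)).card ≤ ({ψ s u₀} : Finset (Fin k)).card :=
            Finset.card_le_card hsub1
        _ = 1 := Finset.card_singleton _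
    · have heq : F s = F (s - 1) := by
        show S.image (ψ s) = S.image (ψ (s - 1))
        have h1 : ψ s = ψ (s - 1) := by rw [hψm s (by omega), hψm (s - 1) (by omega)]
        rw [h1]
      rw [heq, Finset.sdiff_self]
      simp
  have hcntlist : ∀ u, countRecol u (α :: l₁) =
      ((Finset.range m).filter (fun s => ψ (s + 1) u ≠ ψ s u)).card := by
    intro u
    rw [countRecol_eq_card_filter (α :: l₁) β']
    congr 1
  have hNS : ((Finset.Icc 1 m).filter (fun s => F s ≠ F (s - 1))).card ≤ δ * (δ + 1) := by
    have hsubT : (Finset.Icc 1 m).filter (fun s => F s ≠ F (s - 1)) ⊆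
        S.biUnion (fun u => (Finset.Icc 1 m).filter (fun s => ψ s u ≠ ψ (s - 1) u)) := by
      intro s hs
      rw [Finset.mem_filter] at hs
      rw [Finset.mem_biUnion]
      by_contra hno
      push_neg at hno
      apply hs.2
      show S.image (ψ s) = S.image (ψ (s - 1))
      apply Finset.image_congr
      intro u huS
      have := hno u huS
      rw [Finset.mem_filter] at this
      push_neg at this
      have := this hs.1
      exact this
    calc ((Finset.Icc 1 m).filter (fun s => F s ≠ F (s - 1))).card
        ≤ (S.biUnion (fun u => (Finset.Icc 1 m).filter (fun s => ψ s u ≠ ψ (s - 1) u))).card :=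
          Finset.card_le_card hsubT
      _ ≤ ∑ u ∈ S, ((Finset.Icc 1 m).filter (fun s => ψ s u ≠ ψ (s - 1) u)).card :=
          Finset.card_biUnion_le
      _ ≤ ∑ _u ∈ S, (δ + 1) := by
          apply Finset.sum_le_sum
          intro u huS
          have he1 : ((Finset.Icc 1 m).filter (fun s => ψ s u ≠ ψ (s - 1) u)).card =
              ((Finset.range m).filter (fun s => ψ (s + 1) u ≠ ψ s u)).card := by
            rw [← card_filter_range_succ_eq_Icc m (fun s => ψ s u ≠ ψ (s - 1) u)]
            congr 1
          rw [he1, ← hcntlist u]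
          have := hcnt u
          by_cases hu' : u ∈ U' <;> simp [hu'] at this <;> omega
      _ = S.card * (δ + 1) := by rw [Finset.sum_const, smul_eq_mul]
      _ ≤ δ * (δ + 1) := Nat.mul_le_mul_right _ hScard
  -- the v-colour schedule
  obtain ⟨yf, hyf0, R1, R2, hvbound⟩ :
      ∃ yf : ℕ → Fin k, yf 0 = α v ∧
        (∀ s ≤ m, IsDicolouring (relF A U) (Function.update (ψ s) v (yf s))) ∧
        (∀ s, 1 ≤ s → s ≤ m → yf s ≠ yf (s - 1) →
          IsDicolouring (relF A U) (Function.update (ψ (s - 1)) v (yf s))) ∧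
        ((Finset.range m).filter (fun s => yf (s + 1) ≠ yf s)).card +
          (if yf m = β v then 0 else 1) ≤ δ + 1 := by
    by_cases hbl : ∃ t, t ≤ m ∧ ¬ IsDicolouring (relF A U) (Function.update (ψ t) v (α v))
    · -- blocked case
      obtain ⟨t₀, ⟨ht₀m, ht₀bad⟩, ht₀min⟩ :
          ∃ t₀, (t₀ ≤ m ∧ ¬ IsDicolouring (relF A U) (Function.update (ψ t₀) v (α v))) ∧
            ∀ t < t₀, ¬ (t ≤ m ∧ ¬ IsDicolouring (relF A U) (Function.update (ψ t) v (α v))) :=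
        ⟨Nat.find hbl, Nat.find_spec hbl, fun t ht => Nat.find_min hbl ht⟩
      have ht₀1 : 1 ≤ t₀ := by
        rcases Nat.eq_zero_or_pos t₀ with h0 | h; swap; · exact h
        exfalso
        apply ht₀bad
        rw [h0, hψ0, Function.update_eq_self]
        exact hα
      have hmin : ∀ t, t < t₀ → t ≤ m →
          IsDicolouring (relF A U) (Function.update (ψ t) v (α v)) := by
        intro t ht htm
        have := ht₀min t ht
        push_neg at this
        exact this htm
      have hblocked : α v ∈ F t₀ := by
        obtain ⟨u, huS, huc⟩ := blocked_colour_mem (hψdicol t₀) hS hvS ht₀bad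
        exact Finset.mem_image.mpr ⟨u, huS, huc⟩
      have hδ1 : 1 ≤ δ := by
        have h1 : 1 ≤ (F t₀).card := Finset.card_pos.mpr ⟨α v, hblocked⟩
        exact h1.trans (hFcard t₀)
      obtain ⟨y, hsa, hsb, hsc, hsd, hse⟩ :=
        sched k δ hk F m hFcard hFstep (m - t₀) t₀ le_rfl ht₀1 ht₀m
      refine ⟨fun s => if s < t₀ then α v else y s,
        by simp [show (0 : ℕ) < t₀ from ht₀1], ?_, ?_, ?_⟩
      · intro s hsm
        by_cases hst : s < t₀
        · simp only [hst, if_pos, ite_true]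
          exact hmin s hst hsm
        · simp only [hst, ite_false]
          exact hsafe s (y s) (hsa s (by omega) hsm)
      · intro s hs1 hsm hne
        by_cases hst : s < t₀
        · exfalso
          apply hne
          have h2 : s - 1 < t₀ := by omega
          simp [hst, h2]
        · by_cases hst' : s = t₀
          · simp only [hst, ite_false]
            apply hsafe (s - 1) (y s)
            rw [hst']
            exact hsc
          · have hgt : t₀ < s := by omega
            simp only [hst, ite_false]
            apply hsafe (s - 1) (y s)
            apply hsb s hgt hsm
            have h1 : ¬ s < t₀ := by omega
            have h2 : ¬ s - 1 < t₀ := by omega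
            simp only [h1, h2, ite_false] at hne
            exact hne
      · -- the counting bound
        have hyft : ∀ s, t₀ ≤ s → (if s < t₀ then α v else y s) = y s := by
          intro s hs; simp [show ¬ s < t₀ by omega]
        have hchgeq : ((Finset.range m).filter
              (fun s => (if s + 1 < t₀ then α v else y (s + 1)) ≠
                (if s < t₀ then α v else y s))).card =
            1 + ((Finset.Ioc t₀ m).filter (fun s => y s ≠ y (s - 1))).card := by
          have hcg : ((Finset.range m).filter
              (fun s => (if s + 1 < t₀ then α v else y (s + 1)) ≠
                (if s < t₀ then α v else y s))).card =
              ((Finset.range m).filter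
              (fun s => (if s + 1 < t₀ then α v else y (s + 1)) ≠
                (if s + 1 - 1 < t₀ then α v else y (s + 1 - 1)))).card := rfl
          rw [hcg, card_filter_range_succ_eq_Icc m
            (fun s => (if s < t₀ then α v else y s) ≠ (if s - 1 < t₀ then α v else y (s - 1)))]
          · have hsplit : (Finset.Icc 1 m).filter
                (fun s => (if s < t₀ then α v else y s) ≠ (if s - 1 < t₀ then α v else y (s - 1)))
                = insert t₀ ((Finset.Ioc t₀ m).filter (fun s => y s ≠ y (s - 1))) := by
              ext s
              rw [Finset.mem_filter, Finset.mem_insert, Finset.mem_filter,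
                Finset.mem_Icc, Finset.mem_Ioc]
              constructor
              · rintro ⟨⟨h1, h2⟩, h3⟩
                rcases lt_trichotomy s t₀ with h | h | h
                · exfalso; apply h3; simp [h, show s - 1 < t₀ by omega]
                · exact Or.inl h
                · refine Or.inr ⟨⟨h, h2⟩, ?_⟩
                  simpa [show ¬ s < t₀ by omega, show ¬ s - 1 < t₀ by omega] using h3
              · rintro (heq | ⟨⟨h1, h2⟩, h3⟩)
                · refine ⟨by rw [heq]; exact ⟨ht₀1, ht₀m⟩, ?_⟩
                  rw [heq]
                  simp only [show ¬ t₀ < t₀ from by omega, ite_false,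
                    show t₀ - 1 < t₀ from by omega, ite_true]
                  intro heq2
                  exact (hsa t₀ le_rfl ht₀m) (heq2 ▸ hblocked)
                · refine ⟨⟨by omega, h2⟩, ?_⟩
                  simpa [show ¬ s < t₀ by omega, show ¬ s - 1 < t₀ by omega] using h3
            rw [hsplit, Finset.card_insert_of_notMem (by
              rw [Finset.mem_filter, Finset.mem_Ioc]
              rintro ⟨⟨h, -⟩, -⟩
              omega)]
            omega
        have hmlt : ¬ m < t₀ := by omega
        simp only [hmlt, ite_false]
        rw [hchgeq]
        have hfin : (if y m = β v then (0 : ℕ) else 1) ≤ 1 := by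
          split <;> omega
        rcases hse with hchg0 | hineq
        · rw [hchg0]
          omega
        · -- arithmetic
          rcases Nat.eq_zero_or_pos (((Finset.Ioc t₀ m).filter
              (fun s => y s ≠ y (s - 1))).card) with hc0 | hchg1
          · rw [hc0]
            omega
          -- chg ≥ 1
          have hY : (δ + 1) * (((Finset.Ioc t₀ m).filter (fun s => y s ≠ y (s - 1))).card) =
              (δ + 1) * ((((Finset.Ioc t₀ m).filter (fun s => y s ≠ y (s - 1))).card) - 1)
                + (δ + 1) := by
            rw [← Nat.mul_succ]
            congr 1
            omega
          have hQ : (δ + 1) * δ = δ * (δ + 1) := Nat.mul_comm _ _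
          have hev : ((Finset.Ioc t₀ m).filter (fun s => F s ≠ F (s - 1))).card +
              (F (t₀ - 1) ∪ F t₀).card ≤ δ * (δ + 1) + δ := by
            by_cases hFt : F t₀ = F (t₀ - 1)
            · -- no event at t₀: small union
              have hGc : (F (t₀ - 1) ∪ F t₀).card ≤ δ := by
                rw [hFt, Finset.union_self]
                exact hFcard _
              have hevle : ((Finset.Ioc t₀ m).filter (fun s => F s ≠ F (s - 1))).card ≤
                  δ * (δ + 1) := by
                refine le_trans (Finset.card_le_card ?_) hNS
                apply Finset.filter_subset_filter
                intro a ha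
                rw [Finset.mem_Ioc] at ha
                rw [Finset.mem_Icc]
                omega
              omega
            · -- event at t₀
              have hGc : (F (t₀ - 1) ∪ F t₀).card ≤ δ + 1 := by
                calc (F (t₀ - 1) ∪ F t₀).card
                    = (F (t₀ - 1) ∪ (F t₀ \ F (t₀ - 1))).card := by
                      rw [Finset.union_sdiff_self_eq_union]
                  _ ≤ (F (t₀ - 1)).card + (F t₀ \ F (t₀ - 1)).card := Finset.card_union_le _ _
                  _ ≤ δ + 1 := by have := hFcard (t₀ - 1); have := hFstep t₀ ht₀1; omega
              have hevle : ((Finset.Ioc t₀ m).filter (fun s => F s ≠ F (s - 1))).card + 1 ≤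
                  δ * (δ + 1) := by
                refine le_trans ?_ hNS
                have : insert t₀ ((Finset.Ioc t₀ m).filter (fun s => F s ≠ F (s - 1))) ⊆
                    (Finset.Icc 1 m).filter (fun s => F s ≠ F (s - 1)) := by
                  intro a ha
                  rw [Finset.mem_insert] at ha
                  rcases ha with rfl | ha
                  · rw [Finset.mem_filter, Finset.mem_Icc]
                    exact ⟨⟨ht₀1, ht₀m⟩, hFt⟩
                  · rw [Finset.mem_filter, Finset.mem_Ioc] at ha
                    rw [Finset.mem_filter, Finset.mem_Icc]
                    exact ⟨⟨by omega, ha.1.2⟩, ha.2⟩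
                calc ((Finset.Ioc t₀ m).filter (fun s => F s ≠ F (s - 1))).card + 1
                    = (insert t₀ ((Finset.Ioc t₀ m).filter (fun s => F s ≠ F (s - 1)))).card := by
                      rw [Finset.card_insert_of_notMem (by
                        rw [Finset.mem_filter, Finset.mem_Ioc]
                        rintro ⟨⟨h, -⟩, -⟩
                        omega)]
                  _ ≤ _ := Finset.card_le_card this
              omega
          have hYlt : (δ + 1) * (((Finset.Ioc t₀ m).filter
              (fun s => y s ≠ y (s - 1))).card) < (δ + 1) * δ := by omega
          have hchglt : (((Finset.Ioc t₀ m).filter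
              (fun s => y s ≠ y (s - 1))).card) < δ := Nat.lt_of_mul_lt_mul_left hYlt
          omega
    · -- no blocking at all
      push_neg at hbl
      refine ⟨fun _ => α v, rfl, fun s hsm => hbl s hsm, ?_, ?_⟩
      · intro s _ _ hne
        exact absurd rfl hne
      · have h0 : ((Finset.range m).filter
            (fun _s => (α v : Fin k) ≠ α v)).card = 0 := by
          rw [Finset.card_eq_zero, Finset.filter_eq_empty_iff]
          intro s _
          simp
        rw [h0]
        split <;> omega
  -- assemble via lift_path
  have hupβ : ∀ x : Fin k, Function.update (ψ m) v x = Function.update β v x := by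
    intro x
    rw [hψm m le_rfl, hβ'def, Function.update_idem]
  obtain ⟨l, hlch, hllast, hlw, hlv, hllen⟩ :=
    lift_path hβ (fun s h => (hstepm s h).2.2) (fun s h => by rw [hψv, hψv]) hupβ R1 R2
  have hstart : Function.update (ψ 0) v (yf 0) = α := by
    rw [hψ0, hyf0]
    exact Function.update_eq_self v α
  rw [hstart] at hlch hllast hlw hlv hllen
  refine ⟨l, hlch, hllast, ?_, ?_⟩
  · intro w
    by_cases hwv : w = v
    · subst hwv
      rw [hlv, if_pos hvU]
      exact hvbound
    · rw [hlw w hwv, ← hcntlist w]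
      have hw := hcnt w
      by_cases hwU : w ∈ U
      · rw [if_pos hwU]
        have hwU' : w ∈ U' := Finset.mem_erase.mpr ⟨hwv, hwU⟩
        rw [if_pos hwU'] at hw
        exact hw
      · rw [if_neg hwU]
        have hwU' : w ∉ U' := fun h => hwU (hsub h)
        rw [if_neg hwU'] at hw
        exact hw
  · rw [hllen, hlv]
    have hUcard : U'.card + 1 = U.card := Finset.card_erase_add_one hvU
    calc m + (((Finset.range m).filter (fun s => yf (s + 1) ≠ yf s)).card +
          (if yf m = β v then 0 else 1))
        ≤ (δ + 1) * U'.card + (δ + 1) := Nat.add_le_add hlen1 hvbound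
      _ = (δ + 1) * (U'.card + 1) := by ring
      _ = (δ + 1) * U.card := by rw [hUcard]

end PartG

theorem stmt7 [Fintype V] [DecidableEq V] (A : V → V → Prop) (k : ℕ)
    (hk : 2 * (cycleDegeneracy A + 1) ≤ k) (α β : V → Fin k)
    (hα : IsDicolouring A α) (hβ : IsDicolouring A β) :
    ∃ l : List (V → Fin k), RedicolPath A α β l ∧
      (∀ v : V, countRecol v (α :: l) ≤ cycleDegeneracy A + 1) ∧
      l.length ≤ (cycleDegeneracy A + 1) * Fintype.card V := by
  classical
  have hrel : ∀ a b : V, relF A Finset.univ a b ↔ A a b := by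
    intro a b
    simp [relF]
  have hα' : IsDicolouring (relF A Finset.univ) α := (dicolouring_congr hrel).mpr hα
  have hβ' : IsDicolouring (relF A Finset.univ) β := (dicolouring_congr hrel).mpr hβ
  obtain ⟨l, hch, hlast, hcnt, hlen⟩ := main_aux A k hk Finset.univ α β hα' hβ'
    (fun w hw => absurd (Finset.mem_univ w) hw)
  refine ⟨l, ⟨?_, hlast⟩, ?_, ?_⟩
  · refine List.Chain.imp ?_ hch
    intro a b hab
    obtain ⟨h1, h2, h3⟩ := hab
    exact ⟨(dicolouring_congr hrel).mp h1, (dicolouring_congr hrel).mp h2, h3⟩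
  · intro w
    have hw := hcnt w
    simpa using hw
  · rwa [Finset.card_univ] at hlen
end

section
/- Let D be a digraph, k ≥ χ⃗_g(D) + 1, where χ⃗_g(D) is the digrundy number of D. Then the k-dicolouring graph of D has diameter at most 4·χ⃗(D)·n, where n = |V(D)| and χ⃗(D) is the dichromatic number. -/
variable {V : Type*}

/-- A greedy dicolouring: there is an ordering (given by an injective rank
function `o`) such that, for each vertex `v` and each colour `c < φ v`, the set
of earlier vertices coloured `c`, together with `v`, contains a directed
cycle. -/
def IsGreedy (A : V → V → Prop) {k : ℕ} (φ : V → Fin k) : Prop :=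
  IsDicolouring A φ ∧ ∃ o : V → ℕ, Function.Injective o ∧
    ∀ v : V, ∀ c : Fin k, c < φ v →
      ∃ l, IsDicycle A l ∧ ∀ x ∈ l, (o x < o v ∧ φ x = c) ∨ x = v

/-- The digrundy number: the maximum number of colours used by a greedy
dicolouring. -/
noncomputable def digrundy [Fintype V] (A : V → V → Prop) : ℕ :=
  sSup { m | ∃ (k : ℕ) (φ : V → Fin k),
    IsGreedy A φ ∧ (Finset.univ.image φ).card = m }

section Reach

variable {X : Type*} {R : X → X → Prop}

/-- `Reach R n x y`: a walk from `x` to `y` of length at most `n`. -/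
def Reach (R : X → X → Prop) (n : ℕ) (x y : X) : Prop :=
  ∃ l : List X, List.Chain R x l ∧ (x :: l).getLast (List.cons_ne_nil _ _) = y ∧ l.length ≤ n

lemma Reach.refl (n : ℕ) (x : X) : Reach R n x x :=
  ⟨[], List.Chain.nil, rfl, Nat.zero_le n⟩

lemma Reach.mono {m n : ℕ} (h : m ≤ n) {x y : X} (hr : Reach R m x y) : Reach R n x y := by
  obtain ⟨l, h1, h2, h3⟩ := hr
  exact ⟨l, h1, h2, h3.trans h⟩

lemma Reach.head {n : ℕ} {x y z : X} (hxy : R x y) (h : Reach R n y z) :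
    Reach R (n + 1) x z := by
  obtain ⟨l, h1, h2, h3⟩ := h
  refine ⟨y :: l, List.Chain.cons hxy h1, ?_, by simpa using h3⟩
  rw [List.getLast_cons (List.cons_ne_nil _ _)]
  exact h2

lemma Reach.trans {m n : ℕ} {x y z : X} (h1 : Reach R m x y) (h2 : Reach R n y z) :
    Reach R (m + n) x z := by
  obtain ⟨l, hc, hl, hlen⟩ := h1
  induction l generalizing x m with
  | nil =>
    simp only [List.getLast_singleton] at hl
    subst hl
    exact h2.mono (Nat.le_add_left _ _)
  | cons a t ih =>
    rcases List.chain_cons.mp hc with ⟨hxa, hct⟩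
    rw [List.getLast_cons (List.cons_ne_nil _ _)] at hl
    simp only [List.length_cons] at hlen
    have : Reach R (t.length + n) a z := ih hct hl le_rfl
    exact (Reach.head hxa this).mono (by omega)

lemma Reach.symm (hR : Symmetric R) {n : ℕ} {x y : X} (h : Reach R n x y) : Reach R n y x := by
  obtain ⟨l, hc, hl, hlen⟩ := h
  induction l generalizing x n with
  | nil =>
    simp only [List.getLast_singleton] at hl
    subst hl; exact Reach.refl _ _
  | cons a t ih =>
    rcases List.chain_cons.mp hc with ⟨hxa, hct⟩
    rw [List.getLast_cons (List.cons_ne_nil _ _)] at hl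
    simp only [List.length_cons] at hlen
    have h1 : Reach R t.length y a := ih hct hl le_rfl
    have h2 : Reach R 1 a x := ⟨[x], List.Chain.cons (hR hxa) List.Chain.nil, rfl, le_rfl⟩
    exact (h1.trans h2).mono (by omega)

lemma Reach.single {x y : X} (h : R x y) : Reach R 1 x y :=
  ⟨[y], List.Chain.cons h List.Chain.nil, rfl, le_rfl⟩

end Reach

section Dicycle

variable {A : V → V → Prop} {Q : V → Prop}

lemma isDicycle_mono {R S : V → V → Prop} (h : ∀ x y, R x y → S x y) {l : List V}
    (hl : IsDicycle R l) : IsDicycle S l :=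
  ⟨hl.1, hl.2.1, hl.2.2.1.imp h, fun x hx y hy => h x y (hl.2.2.2 x hx y hy)⟩

lemma acyclic_mono {R S : V → V → Prop} (h : ∀ x y, R x y → S x y) (hS : Acyclic S) :
    Acyclic R := fun ⟨l, hl⟩ => hS ⟨l, isDicycle_mono h hl⟩

private lemma chain_conj_mem {a : V} {t : List V}
    (h : List.Chain (fun x y => A x y ∧ Q x ∧ Q y) a t) : ∀ x ∈ t, Q x := by
  induction t generalizing a with
  | nil => simp
  | cons b t ih =>
    rcases List.chain_cons.mp h with ⟨⟨_, _, hQb⟩, hct⟩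
    intro x hx
    rcases List.mem_cons.mp hx with rfl | hx
    · exact hQb
    · exact ih hct x hx

lemma isDicycle_conj_of {l : List V} (h : IsDicycle (fun x y => A x y ∧ Q x ∧ Q y) l) :
    IsDicycle A l ∧ ∀ x ∈ l, Q x := by
  refine ⟨isDicycle_mono (fun x y hxy => hxy.1) h, ?_⟩
  obtain ⟨hne, hnd, hch, hwrap⟩ := h
  cases l with
  | nil => exact absurd rfl hne
  | cons a t =>
    have hQa : Q a := by
      have := hwrap ((a :: t).getLast (List.cons_ne_nil _ _))
        (by simp [List.getLast?_eq_getLast (List.cons_ne_nil a t)]) a rfl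
      exact this.2.2
    have htail := chain_conj_mem (hch : List.Chain _ a t)
    intro x hx
    rcases List.mem_cons.mp hx with rfl | hx
    · exact hQa
    · exact htail x hx

private lemma chain_conj_strengthen {a : V} {t : List V}
    (h : List.Chain A a t) (hQ : ∀ x ∈ a :: t, Q x) :
    List.Chain (fun x y => A x y ∧ Q x ∧ Q y) a t := by
  induction t generalizing a with
  | nil => exact List.Chain.nil
  | cons b t ih =>
    rcases List.chain_cons.mp h with ⟨hab, hct⟩
    refine List.Chain.cons ⟨hab, hQ a (by simp), hQ b (by simp)⟩ ?_
    exact ih hct (fun x hx => hQ x (List.mem_cons_of_mem _ hx))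

lemma isDicycle_conj {l : List V} (h : IsDicycle A l) (hQ : ∀ x ∈ l, Q x) :
    IsDicycle (fun x y => A x y ∧ Q x ∧ Q y) l := by
  obtain ⟨hne, hnd, hch, hwrap⟩ := h
  refine ⟨hne, hnd, ?_, ?_⟩
  · cases l with
    | nil => trivial
    | cons a t => exact chain_conj_strengthen hch hQ
  · intro x hx y hy
    refine ⟨hwrap x hx y hy, hQ x ?_, hQ y ?_⟩
    · cases l with
      | nil => simp at hx
      | cons a t =>
        simp only [List.getLast?_eq_getLast (List.cons_ne_nil a t), Option.mem_some_iff] at hx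
        subst hx; exact List.getLast_mem _
    · cases l with
      | nil => simp at hy
      | cons a t => simp_all

/-- A dicycle all of whose elements equal `v` is `[v]`, forcing a loop. -/
lemma loop_of_dicycle_subsingleton {l : List V} {v : V} (h : IsDicycle A l)
    (hall : ∀ x ∈ l, x = v) : A v v := by
  obtain ⟨hne, hnd, hch, hwrap⟩ := h
  cases l with
  | nil => exact absurd rfl hne
  | cons a t =>
    have ha : a = v := hall a (by simp)
    have ht : t = [] := by
      cases t with
      | nil => rfl
      | cons b t' =>
        have hb : b = v := hall b (by simp)
        have : a ≠ b := by
          intro hab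
          exact (List.nodup_cons.mp hnd).1 (hab ▸ List.mem_cons_self)
        exact absurd (ha.trans hb.symm) this
    subst ht ha
    exact hwrap a (by simp) a rfl

end Dicycle


section GB

variable [Fintype V] [DecidableEq V]

/-- No monochromatic (for `nat`-colouring `ψ`) dicycle inside `W`. -/
def MonoW (A : V → V → Prop) (W : Finset V) (ψ : V → ℕ) : Prop :=
  ∀ (c : ℕ) (l : List V), IsDicycle A l → (∀ x ∈ l, x ∈ W ∧ ψ x = c) → False

/-- Greedy witness for `ψ` on `W` with order `o`. -/
def GreedyWith (A : V → V → Prop) (W : Finset V) (ψ : V → ℕ) (o : V → ℕ) : Prop :=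
  Function.Injective o ∧
    ∀ v ∈ W, ∀ c < ψ v, ∃ l, IsDicycle A l ∧
      ∀ x ∈ l, x = v ∨ (x ∈ W ∧ o x < o v ∧ ψ x = c)

/-- All greedy colourings of the digraph induced on `W` take values below `b`. -/
def GB (A : V → V → Prop) (W : Finset V) (b : ℕ) : Prop :=
  ∀ (ψ : V → ℕ) (o : V → ℕ), MonoW A W ψ → GreedyWith A W ψ o → ∀ v ∈ W, ψ v < b

/-- The vertex set `S` spans no dicycle. -/
def AcySet (A : V → V → Prop) (S : Finset V) : Prop :=
  ∀ l : List V, IsDicycle A l → (∀ x ∈ l, x ∈ S) → False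

variable {A : V → V → Prop}

omit [Fintype V] [DecidableEq V] in
lemma GB.mono {W : Finset V} {b b' : ℕ} (h : GB A W b) (hb : b ≤ b') : GB A W b' :=
  fun ψ o h1 h2 v hv => lt_of_lt_of_le (h ψ o h1 h2 v hv) hb

omit [Fintype V] [DecidableEq V] in
lemma monoW_noLoop {W : Finset V} {ψ : V → ℕ} (h : MonoW A W ψ) {v : V} (hv : v ∈ W) :
    ¬ A v v := by
  intro hloop
  exact h (ψ v) [v] ⟨by simp, by simp, List.isChain_singleton v, by simp [hloop]⟩ (by simp [hv])

omit [DecidableEq V] in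
/-- greedy colourings on `univ` are bounded by the digrundy number. -/
lemma gb_univ (hVne : Nonempty V) : GB A Finset.univ (digrundy A) := by
  intro ψ o hmono hgreedy v _
  classical
  obtain ⟨v₀, _, hv₀⟩ := Finset.exists_max_image Finset.univ ψ
    ⟨Classical.arbitrary V, Finset.mem_univ _⟩
  set M : ℕ := ψ v₀ + 1 with hM
  have hlt : ∀ u : V, ψ u < M := fun u => Nat.lt_succ_of_le (hv₀ u (Finset.mem_univ _))
  set φ : V → Fin M := fun u => ⟨ψ u, hlt u⟩ with hφ
  have hdic : IsDicolouring A φ := by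
    intro c
    rintro ⟨l, hl⟩
    obtain ⟨hlA, hlφ⟩ := isDicycle_conj_of hl
    exact hmono (c : ℕ) l hlA (fun x hx => ⟨Finset.mem_univ _, congrArg Fin.val (hlφ x hx)⟩)
  have hgr : IsGreedy A φ := by
    refine ⟨hdic, o, hgreedy.1, ?_⟩
    intro u c hc
    obtain ⟨l, hl, hcond⟩ := hgreedy.2 u (Finset.mem_univ _) (c : ℕ) hc
    refine ⟨l, hl, fun x hx => ?_⟩
    rcases hcond x hx with rfl | ⟨_, ho, hψ⟩
    · exact Or.inr rfl
    · exact Or.inl ⟨ho, Fin.ext hψ⟩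
  have hmem : (Finset.univ.image φ).card ∈
      { m | ∃ (k : ℕ) (φ' : V → Fin k), IsGreedy A φ' ∧ (Finset.univ.image φ').card = m } :=
    ⟨M, φ, hgr, rfl⟩
  have hbdd : BddAbove { m | ∃ (k : ℕ) (φ' : V → Fin k),
      IsGreedy A φ' ∧ (Finset.univ.image φ').card = m } := by
    refine ⟨Fintype.card V, ?_⟩
    rintro m ⟨k', φ', _, rfl⟩
    exact le_trans (Finset.card_image_le) (by simp)
  have hle : (Finset.univ.image φ).card ≤ digrundy A := le_csSup hbdd hmem
  have hdown : ∀ c < ψ v₀, ∃ u : V, ψ u = c := by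
    intro c hc
    obtain ⟨l, hl, hcond⟩ := hgreedy.2 v₀ (Finset.mem_univ _) c hc
    by_cases hall : ∀ x ∈ l, x = v₀
    · exact absurd (loop_of_dicycle_subsingleton hl hall)
        (monoW_noLoop hmono (Finset.mem_univ v₀))
    · push_neg at hall
      obtain ⟨x, hxl, hxv⟩ := hall
      rcases hcond x hxl with rfl | ⟨_, _, hψ⟩
      · exact absurd rfl hxv
      · exact ⟨x, hψ⟩
  have himg : Finset.range (ψ v₀ + 1) ⊆ Finset.univ.image ψ := by
    intro c hc
    simp only [Finset.mem_range] at hc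
    rcases Nat.lt_succ_iff_lt_or_eq.mp hc with hlt' | rfl
    · obtain ⟨u, hu⟩ := hdown c hlt'
      exact Finset.mem_image.mpr ⟨u, Finset.mem_univ _, hu⟩
    · exact Finset.mem_image.mpr ⟨v₀, Finset.mem_univ _, rfl⟩
  have hcard : ψ v₀ + 1 ≤ (Finset.univ.image ψ).card := by
    simpa using Finset.card_le_card himg
  have himgeq : (Finset.univ.image φ).card = (Finset.univ.image ψ).card := by
    have heq : Finset.univ.image ψ = (Finset.univ.image φ).image (Fin.val) := by
      ext c
      constructor
      · intro hc
        obtain ⟨u, _, rfl⟩ := Finset.mem_image.mp hc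
        exact Finset.mem_image.mpr ⟨φ u, Finset.mem_image.mpr ⟨u, Finset.mem_univ _, rfl⟩, rfl⟩
      · intro hc
        obtain ⟨x, hx, rfl⟩ := Finset.mem_image.mp hc
        obtain ⟨u, _, rfl⟩ := Finset.mem_image.mp hx
        exact Finset.mem_image.mpr ⟨u, Finset.mem_univ _, rfl⟩
    rw [heq, Finset.card_image_of_injective _ Fin.val_injective]
  calc ψ v ≤ ψ v₀ := hv₀ v (Finset.mem_univ _)
    _ < ψ v₀ + 1 := Nat.lt_succ_self _
    _ ≤ (Finset.univ.image ψ).card := hcard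
    _ = (Finset.univ.image φ).card := himgeq.symm
    _ ≤ digrundy A := hle

omit [Fintype V] in
/-- Removing a dominating acyclic set decreases the greedy bound. -/
lemma gb_step {W Y : Finset V} {b : ℕ} (hYW : Y ⊆ W) (hYacy : AcySet A Y)
    (hdom : ∀ v ∈ W, v ∉ Y → ∃ l, IsDicycle A l ∧ ∀ x ∈ l, x = v ∨ x ∈ Y)
    (ι : V → ℕ) (hι : Function.Injective ι) (N : ℕ) (hιN : ∀ v, ι v < N)
    (h : GB A W b) : GB A (W \ Y) (b - 1) := by
  classical
  intro ψ o hmono hgreedy v hv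
  set Ψ : V → ℕ := fun u => if u ∈ Y then 0 else ψ u + 1 with hΨ
  set O : V → ℕ := fun u => if u ∈ Y then ι u else N + o u with hO
  have hOinj : Function.Injective O := by
    intro x y hxy
    simp only [hO] at hxy
    by_cases hx : x ∈ Y <;> by_cases hy : y ∈ Y <;> simp [hx, hy] at hxy
    · exact hι hxy
    · exact absurd hxy.symm (Nat.ne_of_gt (lt_of_lt_of_le (hιN x) (Nat.le_add_right _ _)))
    · exact absurd hxy (Nat.ne_of_gt (lt_of_lt_of_le (hιN y) (Nat.le_add_right _ _)))
    · exact hgreedy.1 hxy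
  have hmono' : MonoW A W Ψ := by
    intro c l hl hcond
    rcases Nat.eq_zero_or_pos c with rfl | hc
    · refine hYacy l hl (fun x hx => ?_)
      rcases hcond x hx with ⟨hxW, hΨx⟩
      by_contra hxY
      simp [hΨ, hxY] at hΨx
    · obtain ⟨c', rfl⟩ := Nat.exists_eq_succ_of_ne_zero (Nat.pos_iff_ne_zero.mp hc)
      refine hmono c' l hl (fun x hx => ?_)
      rcases hcond x hx with ⟨hxW, hΨx⟩
      have hxY : x ∉ Y := by
        intro hxY; simp [hΨ, hxY] at hΨx
      simp only [hΨ, if_neg hxY] at hΨx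
      exact ⟨Finset.mem_sdiff.mpr ⟨hxW, hxY⟩, Nat.succ_injective hΨx⟩
  have hgreedy' : GreedyWith A W Ψ O := by
    refine ⟨hOinj, ?_⟩
    intro u hu c hc
    have huY : u ∉ Y := by
      intro huY; simp [hΨ, huY] at hc
    have hΨu : Ψ u = ψ u + 1 := by simp [hΨ, huY]
    rcases Nat.eq_zero_or_pos c with rfl | hcpos
    · obtain ⟨l, hl, hcond⟩ := hdom u hu huY
      refine ⟨l, hl, fun x hx => ?_⟩
      rcases hcond x hx with rfl | hxY
      · exact Or.inl rfl
      · refine Or.inr ⟨hYW hxY, ?_, by simp [hΨ, hxY]⟩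
        simp only [hO, if_pos hxY, if_neg huY]
        exact lt_of_lt_of_le (hιN x) (Nat.le_add_right _ _)
    · obtain ⟨c', rfl⟩ := Nat.exists_eq_succ_of_ne_zero (Nat.pos_iff_ne_zero.mp hcpos)
      rw [hΨu] at hc
      have hc' : c' < ψ u := by omega
      obtain ⟨l, hl, hcond⟩ := hgreedy.2 u (Finset.mem_sdiff.mpr ⟨hu, huY⟩) c' hc'
      refine ⟨l, hl, fun x hx => ?_⟩
      rcases hcond x hx with rfl | ⟨hxW', hox, hψx⟩
      · exact Or.inl rfl
      · have hxW := Finset.mem_sdiff.mp hxW'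
        refine Or.inr ⟨hxW.1, ?_, by simp [hΨ, hxW.2, hψx]⟩
        simp only [hO, if_neg hxW.2, if_neg huY]
        omega
  have hb := h Ψ O hmono' hgreedy' v (Finset.mem_sdiff.mp hv).1
  have hvY : v ∉ Y := (Finset.mem_sdiff.mp hv).2
  simp only [hΨ, if_neg hvY] at hb
  omega

omit [Fintype V] [DecidableEq V] in
/-- There exists a maximal acyclic set `Y` with `X₀ ⊆ Y ⊆ W`, which is dominating. -/
lemma exists_max_acyclic {W X₀ : Finset V} (hX₀W : X₀ ⊆ W) (hX₀ : AcySet A X₀)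
    (hW : W.Nonempty) (hnoloop : ∀ v ∈ W, ¬ A v v) :
    ∃ Y : Finset V, X₀ ⊆ Y ∧ Y ⊆ W ∧ AcySet A Y ∧ Y.Nonempty ∧
      ∀ v ∈ W, v ∉ Y → ∃ l, IsDicycle A l ∧ ∀ x ∈ l, x = v ∨ x ∈ Y := by
  classical
  set F : Finset (Finset V) := W.powerset.filter (fun Z => X₀ ⊆ Z ∧ AcySet A Z) with hF
  have hX₀F : X₀ ∈ F := by
    simp only [hF, Finset.mem_filter, Finset.mem_powerset]
    exact ⟨hX₀W, le_refl _, hX₀⟩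
  obtain ⟨Y, hYF, hYmax⟩ := Finset.exists_max_image F Finset.card ⟨X₀, hX₀F⟩
  simp only [hF, Finset.mem_filter, Finset.mem_powerset] at hYF
  obtain ⟨hYW, hX₀Y, hYacy⟩ := hYF
  have hsingle : ∀ v ∈ W, AcySet A {v} := by
    intro v hv l hl hall
    refine hnoloop v hv (loop_of_dicycle_subsingleton hl ?_)
    intro x hx; simpa using hall x hx
  have hYne : Y.Nonempty := by
    rcases Finset.eq_empty_or_nonempty Y with rfl | h
    · obtain ⟨v, hv⟩ := hW
      have hX₀e : X₀ = ∅ := Finset.subset_empty.mp hX₀Y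
      have hvF : {v} ∈ F := by
        simp only [hF, Finset.mem_filter, Finset.mem_powerset]
        exact ⟨Finset.singleton_subset_iff.mpr hv, by simp [hX₀e], hsingle v hv⟩
      have := hYmax {v} hvF
      simp at this
    · exact h
  refine ⟨Y, hX₀Y, hYW, hYacy, hYne, ?_⟩
  intro v hvW hvY
  by_contra hno
  push_neg at hno
  have hZacy : AcySet A (insert v Y) := by
    intro l hl hall
    obtain ⟨x, hxl, hx1, hx2⟩ := hno l hl
    rcases Finset.mem_insert.mp (hall x hxl) with rfl | hxY
    · exact hx1 rfl
    · exact hx2 hxY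
  have hZF : insert v Y ∈ F := by
    simp only [hF, Finset.mem_filter, Finset.mem_powerset]
    exact ⟨Finset.insert_subset hvW hYW, hX₀Y.trans (Finset.subset_insert _ _), hZacy⟩
  have := hYmax _ hZF
  rw [Finset.card_insert_of_notMem hvY] at this
  omega

end GB

section Greedify

variable [DecidableEq V] {A : V → V → Prop} {k : ℕ}

lemma dicol_no_mono {φ : V → Fin k} (h : IsDicolouring A φ) {l : List V}
    (hl : IsDicycle A l) {c : Fin k} (hc : ∀ x ∈ l, φ x = c) : False :=
  h c ⟨l, isDicycle_conj hl hc⟩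

lemma greedify_aux (A : V → V → Prop) (δ : V → Fin k) (p : ℕ) (W : Finset V)
    (key : V → ℕ) (hkeyinj : Function.Injective key)
    (hkey1 : ∀ x y : V, (δ x : ℕ) < (δ y : ℕ) → key x < key y) :
    ∀ (m : ℕ) (U : Finset V), U ⊆ W → U.card = m →
    ∀ φ : V → Fin k,
    IsDicolouring A φ →
    (∀ v ∈ U, φ v = δ v) →
    (∀ v, v ∉ W → φ v = δ v) →
    (∀ v, v ∉ W → p ≤ (δ v : ℕ)) →
    (∀ v ∈ W, (δ v : ℕ) < p) →
    (∀ v ∈ W, v ∉ U → ((φ v : ℕ) ≤ (δ v : ℕ) ∧ ∀ c : ℕ, c < (φ v : ℕ) →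
        ∃ l, IsDicycle A l ∧ ∀ x ∈ l, x = v ∨ (x ∈ W ∧ key x < key v ∧ (φ x : ℕ) = c))) →
    (∀ v ∈ W, v ∉ U → ∀ u ∈ U, key v < key u) →
    ∃ g : V → Fin k,
      Reach (DicolStep A) m φ g ∧
      IsDicolouring A g ∧
      (∀ v, v ∉ U → g v = φ v) ∧
      (∀ v ∈ U, (g v : ℕ) ≤ (δ v : ℕ)) ∧
      (∀ v ∈ W, ∀ c : ℕ, c < (g v : ℕ) →
        ∃ l, IsDicycle A l ∧ ∀ x ∈ l, x = v ∨ (x ∈ W ∧ key x < key v ∧ (g x : ℕ) = c)) := by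
  intro m
  induction m with
  | zero =>
    intro U hUW hUcard φ H1 H2 H3 H4 H5 H6 H7
    have hU : U = ∅ := Finset.card_eq_zero.mp hUcard
    subst hU
    refine ⟨φ, Reach.refl _ _, H1, fun v _ => rfl, by simp, ?_⟩
    intro v hv c hc
    exact (H6 v hv (Finset.notMem_empty v)).2 c hc
  | succ m ih =>
    intro U hUW hUcard φ H1 H2 H3 H4 H5 H6 H7
    have hUne : U.Nonempty := Finset.card_pos.mp (by omega)
    obtain ⟨u, huU, humin⟩ := Finset.exists_min_image U key hUne
    have huW : u ∈ W := hUW huU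
    have hφu : φ u = δ u := H2 u huU
    -- the set of good colours
    set Good : ℕ → Prop := fun c =>
      ¬ ∃ l, IsDicycle A l ∧ ∀ x ∈ l, x = u ∨ (φ x : ℕ) = c with hGoodDef
    have hGoodδ : Good ((δ u : ℕ)) := by
      rintro ⟨l, hl, hcond⟩
      refine dicol_no_mono H1 hl (c := δ u) (fun x hx => ?_)
      rcases hcond x hx with rfl | h
      · exact hφu
      · exact Fin.ext h
    have hSne : {c : ℕ | Good c}.Nonempty := ⟨_, hGoodδ⟩
    set cs : ℕ := sInf {c : ℕ | Good c} with hcs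
    have hGoodcs : Good cs := Nat.sInf_mem hSne
    have hcsle : cs ≤ (δ u : ℕ) := Nat.sInf_le hGoodδ
    have hcsk : cs < k := lt_of_le_of_lt hcsle (δ u).isLt
    set cstar : Fin k := ⟨cs, hcsk⟩ with hcstar
    set φ' : V → Fin k := Function.update φ u cstar with hφ'
    have hφ'u : φ' u = cstar := Function.update_self u cstar φ
    have hφ'x : ∀ x, x ≠ u → φ' x = φ x := fun x hx => Function.update_of_ne hx cstar φ
    have hdic' : IsDicolouring A φ' := by
      intro c
      rintro ⟨l, hl⟩
      obtain ⟨hlA, hlc⟩ := isDicycle_conj_of hl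
      by_cases hcu : c = cstar
      · subst hcu
        refine hGoodcs ⟨l, hlA, fun x hx => ?_⟩
        rcases eq_or_ne x u with rfl | hxu
        · exact Or.inl rfl
        · exact Or.inr (congrArg Fin.val ((hφ'x x hxu).symm.trans (hlc x hx)))
      · refine dicol_no_mono H1 hlA (c := c) (fun x hx => ?_)
        rcases eq_or_ne x u with rfl | hxu
        · exact absurd (hφ'u.symm.trans (hlc x hx)) (fun h => hcu h.symm)
        · exact (hφ'x x hxu).symm.trans (hlc x hx)
    -- facts about blocked colours
    have hblocked : ∀ c : ℕ, c < cs →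
        ∃ l, IsDicycle A l ∧ ∀ x ∈ l, x = u ∨ (x ∈ W ∧ key x < key u ∧ (φ' x : ℕ) = c) := by
      intro c hc
      have hnot : ¬ Good c := Nat.notMem_of_lt_sInf (hcs ▸ hc)
      simp only [hGoodDef] at hnot
      obtain ⟨l, hl, hcond⟩ := not_not.mp hnot
      refine ⟨l, hl, fun x hx => ?_⟩
      rcases hcond x hx with rfl | hφxval
      · exact Or.inl rfl
      · rcases eq_or_ne x u with rfl | hxu
        · exact Or.inl rfl
        have hcltp : c < p := by
          have := H5 u huW
          omega
        have hxW : x ∈ W := by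
          by_contra hxW
          have h1 := H3 x hxW
          have h2 := H4 x hxW
          rw [h1] at hφxval
          omega
        have hxU : x ∉ U := by
          intro hxU
          have hδx : (δ x : ℕ) = c := by
            rw [← congrArg Fin.val (H2 x hxU)]; exact hφxval
          have hkle : key u ≤ key x := humin x hxU
          have : ¬ ((δ x : ℕ) < (δ u : ℕ)) := fun hlt =>
            absurd (hkey1 x u hlt) (not_lt.mpr hkle)
          omega
        refine Or.inr ⟨hxW, H7 x hxW hxU u huU, ?_⟩
        rw [hφ'x x hxu]; exact hφxval
    -- apply IH
    have hstep : ∀ v ∈ U.erase u, φ' v = δ v := by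
      intro v hv
      have hvu := (Finset.mem_erase.mp hv).1
      rw [hφ'x v hvu]; exact H2 v (Finset.mem_erase.mp hv).2
    have hH6' : ∀ v ∈ W, v ∉ U.erase u → ((φ' v : ℕ) ≤ (δ v : ℕ) ∧ ∀ c : ℕ, c < (φ' v : ℕ) →
        ∃ l, IsDicycle A l ∧ ∀ x ∈ l, x = v ∨ (x ∈ W ∧ key x < key v ∧ (φ' x : ℕ) = c)) := by
      intro v hvW hvU'
      rcases eq_or_ne v u with rfl | hvu
      · refine ⟨by rw [hφ'u]; exact hcsle, ?_⟩
        intro c hc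
        rw [hφ'u] at hc
        exact hblocked c hc
      · have hvU : v ∉ U := fun hvU => hvU' (Finset.mem_erase.mpr ⟨hvu, hvU⟩)
        obtain ⟨hle, hwit⟩ := H6 v hvW hvU
        rw [hφ'x v hvu]
        refine ⟨hle, fun c hc => ?_⟩
        obtain ⟨l, hl, hcond⟩ := hwit c hc
        refine ⟨l, hl, fun x hx => ?_⟩
        rcases hcond x hx with rfl | ⟨hxW, hkx, hφx⟩
        · exact Or.inl rfl
        · have hxu : x ≠ u := by
            intro rfl'
            subst rfl'
            exact absurd (H7 v hvW hvU x huU) (not_lt.mpr (le_of_lt hkx))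
          exact Or.inr ⟨hxW, hkx, by rw [hφ'x x hxu]; exact hφx⟩
    have hH7' : ∀ v ∈ W, v ∉ U.erase u → ∀ w ∈ U.erase u, key v < key w := by
      intro v hvW hvU' w hw
      obtain ⟨hwu, hwU⟩ := Finset.mem_erase.mp hw
      rcases eq_or_ne v u with rfl | hvu
      · exact lt_of_le_of_ne (humin w hwU) (fun h => hwu (hkeyinj h).symm)
      · have hvU : v ∉ U := fun hvU => hvU' (Finset.mem_erase.mpr ⟨hvu, hvU⟩)
        exact H7 v hvW hvU w hwU
    obtain ⟨g, hreach, hgdic, hgpres, hgbd, hgwit⟩ :=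
      ih (U.erase u) ((Finset.erase_subset _ _).trans hUW)
        (by rw [Finset.card_erase_of_mem huU, hUcard]; omega) φ' hdic' hstep
        (fun v hv => by
          rw [hφ'x v (fun h => hv (h ▸ huW))]
          exact H3 v hv)
        H4 H5 hH6' hH7'
    have hgu : g u = cstar :=
      (hgpres u (Finset.notMem_erase _ _)).trans hφ'u
    refine ⟨g, ?_, hgdic, ?_, ?_, hgwit⟩
    · -- the path
      by_cases hmove : cstar = φ u
      · have : φ' = φ := by
          rw [hφ', hmove]
          exact Function.update_eq_self u φ
        rw [this] at hreach
        exact hreach.mono (Nat.le_succ m)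
      · have hstep1 : DicolStep A φ φ' := by
          refine ⟨H1, hdic', u, ?_, ?_⟩
          · show φ u ≠ φ' u
            rw [hφ'u]
            exact fun h => hmove h.symm
          · intro y hy
            by_contra hyu
            exact hy (hφ'x y hyu).symm
        exact Reach.head hstep1 hreach
    · intro v hv
      have hvu : v ≠ u := fun h => hv (h ▸ huU)
      rw [hgpres v (fun h => hv (Finset.mem_of_mem_erase h)), hφ'x v hvu]
    · intro v hv
      rcases eq_or_ne v u with rfl | hvu
      · rw [hgu]
        exact hcsle
      · exact hgbd v (Finset.mem_erase.mpr ⟨hvu, hv⟩)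

end Greedify

section MainLemma

variable [Fintype V] [DecidableEq V] {A : V → V → Prop} {k : ℕ}

omit [Fintype V] in
lemma monoW_of_dicol {φ : V → Fin k} (h : IsDicolouring A φ) (W : Finset V) :
    MonoW A W (fun v => (φ v : ℕ)) := by
  intro c l hl hcond
  obtain ⟨x₀, hx₀⟩ := List.exists_mem_of_ne_nil l hl.1
  refine dicol_no_mono h hl (c := φ x₀) (fun x hx => ?_)
  exact Fin.ext (((hcond x hx).2).trans ((hcond x₀ hx₀).2).symm)

omit [Fintype V] in
lemma dicol_noloop {φ : V → Fin k} (h : IsDicolouring A φ) (v : V) : ¬ A v v := by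
  intro hloop
  exact dicol_no_mono h (l := [v]) ⟨by simp, by simp, List.isChain_singleton v, by simp [hloop]⟩
    (c := φ v) (by simp)

omit [Fintype V] in
lemma dicolStep_symm : Symmetric (DicolStep A (k := k)) := by
  rintro a b ⟨h1, h2, v, hv, hu⟩
  exact ⟨h2, h1, v, fun h => hv h.symm, fun y hy => hu y (fun h => hy h.symm)⟩

/-- Greedify: reach a greedy colouring on `W` in at most `|W|` steps. -/
lemma greedify (A : V → V → Prop) {k : ℕ} (W : Finset V) (p : ℕ) (φ : V → Fin k)
    (hdic : IsDicolouring A φ)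
    (hW : ∀ v ∈ W, (φ v : ℕ) < p)
    (hpark : ∀ v ∉ W, p ≤ (φ v : ℕ)) :
    ∃ g : V → Fin k, Reach (DicolStep A) W.card φ g ∧ IsDicolouring A g ∧
      (∀ v ∉ W, g v = φ v) ∧ MonoW A W (fun v => (g v : ℕ)) ∧
      ∃ o, GreedyWith A W (fun v => (g v : ℕ)) o := by
  classical
  set N := Fintype.card V with hN
  set e := Fintype.equivFin V with he
  set key : V → ℕ := fun v => (φ v : ℕ) * N + (e v : ℕ) with hkey
  have heN : ∀ v, ((e v : Fin N) : ℕ) < N := fun v => (e v).isLt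
  have hkey1 : ∀ x y : V, (φ x : ℕ) < (φ y : ℕ) → key x < key y := by
    intro x y hxy
    calc key x = (φ x : ℕ) * N + (e x : ℕ) := rfl
      _ < (φ x : ℕ) * N + N := by have := heN x; omega
      _ = ((φ x : ℕ) + 1) * N := by ring
      _ ≤ (φ y : ℕ) * N := Nat.mul_le_mul_right N (by omega)
      _ ≤ key y := Nat.le_add_right _ _
  have hkeyinj : Function.Injective key := by
    intro x y hxy
    have hφ : (φ x : ℕ) = (φ y : ℕ) := by
      by_contra h
      rcases Nat.lt_or_ge (φ x : ℕ) (φ y : ℕ) with h' | h'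
      · exact absurd hxy (Nat.ne_of_lt (hkey1 x y h'))
      · have h'' : (φ y : ℕ) < (φ x : ℕ) := by omega
        exact absurd hxy.symm (Nat.ne_of_lt (hkey1 y x h''))
    have hex : (e x : ℕ) = (e y : ℕ) := by
      have h2 : (φ x : ℕ) * N + (e x : ℕ) = (φ y : ℕ) * N + (e y : ℕ) := hxy
      rw [hφ] at h2
      omega
    exact e.injective (Fin.ext hex)
  obtain ⟨g, hreach, hgdic, hgpres, hgbd, hgwit⟩ :=
    greedify_aux A φ p W key hkeyinj hkey1 W.card W le_rfl rfl φ hdic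
      (fun v _ => rfl) (fun v _ => rfl) hpark hW
      (fun v hvW hvn => absurd hvW hvn) (fun v hvW hvn => absurd hvW hvn)
  refine ⟨g, hreach, hgdic, hgpres, ?_, ?_⟩
  · exact monoW_of_dicol hgdic W
  · exact ⟨key, hkeyinj, hgwit⟩

/-- Park the vertices of `Y` at the colour `pc`, one by one. -/
lemma park (A : V → V → Prop) {k : ℕ} (Y W : Finset V) (hYW : Y ⊆ W)
    (hYacy : AcySet A Y) (g : V → Fin k) (pc : Fin k)
    (hgW : ∀ v ∈ W, (g v : ℕ) < (pc : ℕ))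
    (hgpark : ∀ v ∉ W, (pc : ℕ) < (g v : ℕ)) :
    ∀ (m : ℕ) (S : Finset V), S ⊆ Y → S.card = m → ∀ ψ : V → Fin k,
    IsDicolouring A ψ →
    (∀ v ∈ S, ψ v = g v) →
    (∀ v ∈ Y, v ∉ S → ψ v = pc) →
    (∀ v, v ∉ Y → ψ v = g v) →
    ∃ ψ' : V → Fin k, Reach (DicolStep A) m ψ ψ' ∧ IsDicolouring A ψ' ∧
      (∀ v ∈ Y, ψ' v = pc) ∧ (∀ v, v ∉ Y → ψ' v = g v) := by
  intro m
  induction m with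
  | zero =>
    intro S hSY hScard ψ hψ h1 h2 h3
    have hS : S = ∅ := Finset.card_eq_zero.mp hScard
    subst hS
    exact ⟨ψ, Reach.refl _ _, hψ, fun v hv => h2 v hv (Finset.notMem_empty v), h3⟩
  | succ m ih =>
    intro S hSY hScard ψ hψ h1 h2 h3
    have hSne : S.Nonempty := Finset.card_pos.mp (by omega)
    obtain ⟨s, hsS⟩ := hSne
    have hsY : s ∈ Y := hSY hsS
    have hsW : s ∈ W := hYW hsY
    set psiP : V → Fin k := Function.update ψ s pc with hpsiP
    have hpsiPs : psiP s = pc := Function.update_self s pc ψ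
    have hpsiPx : ∀ x, x ≠ s → psiP x = ψ x := fun x hx => Function.update_of_ne hx pc ψ
    have hmemY : ∀ x, ψ x = pc → x ∈ Y := by
      intro x hx
      by_contra hxY
      have hgx : ψ x = g x := h3 x hxY
      rw [hgx] at hx
      by_cases hxW : x ∈ W
      · have := hgW x hxW
        rw [hx] at this
        omega
      · have := hgpark x hxW
        rw [hx] at this
        omega
    have hpsiPdic : IsDicolouring A psiP := by
      intro c
      rintro ⟨l, hl⟩
      obtain ⟨hlA, hlc⟩ := isDicycle_conj_of hl
      by_cases hcpc : c = pc
      · subst hcpc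
        refine hYacy l hlA (fun x hx => ?_)
        rcases eq_or_ne x s with rfl | hxs
        · exact hsY
        · exact hmemY x ((hpsiPx x hxs).symm.trans (hlc x hx))
      · refine dicol_no_mono hψ hlA (c := c) (fun x hx => ?_)
        rcases eq_or_ne x s with rfl | hxs
        · exact absurd (hpsiPs.symm.trans (hlc x hx)) (fun h => hcpc h.symm)
        · exact (hpsiPx x hxs).symm.trans (hlc x hx)
    have hstep : DicolStep A ψ psiP := by
      refine ⟨hψ, hpsiPdic, s, ?_, ?_⟩
      · show ψ s ≠ psiP s
        rw [hpsiPs, h1 s hsS]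
        intro h
        have := hgW s hsW
        rw [h] at this
        omega
      · intro y hy
        by_contra hys
        exact hy (hpsiPx y hys).symm
    obtain ⟨ψ', hreach, hdic', hY', hoff'⟩ := ih (S.erase s) ((Finset.erase_subset _ _).trans hSY)
      (by rw [Finset.card_erase_of_mem hsS, hScard]; omega) psiP hpsiPdic
      (fun v hv => by
        rw [hpsiPx v (Finset.mem_erase.mp hv).1]
        exact h1 v (Finset.mem_erase.mp hv).2)
      (fun v hvY hvS => by
        rcases eq_or_ne v s with rfl | hvs
        · exact hpsiPs
        · rw [hpsiPx v hvs]
          exact h2 v hvY (fun h => hvS (Finset.mem_erase.mpr ⟨hvs, h⟩)))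
      (fun v hv => by
        have hvs : v ≠ s := fun h => hv (h ▸ hsY)
        rw [hpsiPx v hvs]
        exact h3 v hv)
    exact ⟨ψ', Reach.head hstep hreach, hdic', hY', hoff'⟩

/-- Main induction: two colourings agreeing off `W` are connected. -/
lemma main_rec (A : V → V → Prop) {k : ℕ} :
    ∀ (c : ℕ) (W : Finset V) (p b : ℕ) (φ₁ φ₂ : V → Fin k),
    IsDicolouring A φ₁ → IsDicolouring A φ₂ →
    (∀ v ∈ W, (φ₁ v : ℕ) < p) → (∀ v ∈ W, (φ₂ v : ℕ) < p) →
    (∀ v, v ∉ W → p ≤ (φ₁ v : ℕ)) →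
    (∀ v, v ∉ W → φ₁ v = φ₂ v) →
    GB A W b → b < p → p ≤ k →
    (∃ γ : V → ℕ, MonoW A W γ ∧ ∀ v ∈ W, γ v < c) →
    Reach (DicolStep A) (4 * c * W.card) φ₁ φ₂ := by
  intro c
  induction c with
  | zero =>
    intro W p b φ₁ φ₂ h1 h2 _ _ _ hoff _ _ _ h5
    obtain ⟨γ, _, hγ⟩ := h5
    have hW : W = ∅ := by
      rcases Finset.eq_empty_or_nonempty W with h | ⟨v, hv⟩
      · exact h
      · exact absurd (hγ v hv) (by omega)
    have : φ₁ = φ₂ := funext (fun v => hoff v (hW ▸ Finset.notMem_empty v))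
    rw [this]
    exact Reach.refl _ _
  | succ c ih =>
    intro W p b φ₁ φ₂ h1 h2 hW1 hW2 hpark hoff hGB hbp hpk h5
    rcases Finset.eq_empty_or_nonempty W with hWe | hWne
    · have : φ₁ = φ₂ := funext (fun v => hoff v (hWe ▸ Finset.notMem_empty v))
      rw [this]
      exact Reach.refl _ _
    classical
    obtain ⟨γ, hγmono, hγ⟩ := h5
    -- greedify both sides
    obtain ⟨g₁, hre1, hg1dic, hg1off, hg1mono, o₁, hg1grd⟩ := greedify A W p φ₁ h1 hW1 hpark
    have hpark2 : ∀ v, v ∉ W → p ≤ (φ₂ v : ℕ) := fun v hv => (hoff v hv) ▸ hpark v hv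
    obtain ⟨g₂, hre2, hg2dic, hg2off, hg2mono, o₂, hg2grd⟩ := greedify A W p φ₂ h2 hW2 hpark2
    have hg1b : ∀ v ∈ W, (g₁ v : ℕ) < b := hGB _ o₁ hg1mono hg1grd
    have hg2b : ∀ v ∈ W, (g₂ v : ℕ) < b := hGB _ o₂ hg2mono hg2grd
    have hb1 : 1 ≤ b := by
      obtain ⟨v, hv⟩ := hWne
      have := hg1b v hv
      omega
    have hp1 : 1 ≤ p := by omega
    have hk1 : 1 ≤ k := by omega
    -- the maximal acyclic set containing the top class of γ
    set X₀ : Finset V := W.filter (fun v => γ v = c) with hX₀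
    have hX₀W : X₀ ⊆ W := Finset.filter_subset _ _
    have hX₀acy : AcySet A X₀ := by
      intro l hl hcond
      refine hγmono c l hl (fun x hx => ?_)
      have := Finset.mem_filter.mp (hcond x hx)
      exact ⟨this.1, this.2⟩
    have hnoloop : ∀ v ∈ W, ¬ A v v := fun v _ => dicol_noloop h1 v
    obtain ⟨Y, hX₀Y, hYW, hYacy, hYne, hdom⟩ :=
      exists_max_acyclic hX₀W hX₀acy hWne hnoloop
    -- park both sides
    set pc : Fin k := ⟨p - 1, by omega⟩ with hpc
    have hpcval : (pc : ℕ) = p - 1 := rfl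
    have hgW1 : ∀ v ∈ W, (g₁ v : ℕ) < (pc : ℕ) := by
      intro v hv
      have := hg1b v hv
      rw [hpcval]
      omega
    have hgW2 : ∀ v ∈ W, (g₂ v : ℕ) < (pc : ℕ) := by
      intro v hv
      have := hg2b v hv
      rw [hpcval]
      omega
    have hgpark1 : ∀ v, v ∉ W → (pc : ℕ) < (g₁ v : ℕ) := by
      intro v hv
      rw [hg1off v hv, hpcval]
      have := hpark v hv
      omega
    have hgpark2 : ∀ v, v ∉ W → (pc : ℕ) < (g₂ v : ℕ) := by
      intro v hv
      rw [hg2off v hv, hpcval]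
      have := hpark2 v hv
      omega
    obtain ⟨ψ₁, hreP1, hψ₁dic, hψ₁Y, hψ₁off⟩ :=
      park A Y W hYW hYacy g₁ pc hgW1 (fun v hv => hgpark1 v hv) Y.card Y le_rfl rfl g₁ hg1dic
        (fun v _ => rfl) (fun v hv hv' => absurd hv hv') (fun v _ => rfl)
    obtain ⟨ψ₂, hreP2, hψ₂dic, hψ₂Y, hψ₂off⟩ :=
      park A Y W hYW hYacy g₂ pc hgW2 (fun v hv => hgpark2 v hv) Y.card Y le_rfl rfl g₂ hg2dic
        (fun v _ => rfl) (fun v hv hv' => absurd hv hv') (fun v _ => rfl)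
    -- the recursion on W \ Y
    have hGB' : GB A (W \ Y) (b - 1) := by
      refine gb_step hYW hYacy hdom (fun v => ((Fintype.equivFin V) v : ℕ))
        (fun x y h => (Fintype.equivFin V).injective (Fin.ext h)) (Fintype.card V)
        (fun v => ((Fintype.equivFin V) v).isLt) hGB
    have hrec : Reach (DicolStep A) (4 * c * (W \ Y).card) ψ₁ ψ₂ := by
      refine ih (W \ Y) (p - 1) (b - 1) ψ₁ ψ₂ hψ₁dic hψ₂dic ?_ ?_ ?_ ?_ hGB' (by omega) (by omega) ?_
      · intro v hv
        have hvm := Finset.mem_sdiff.mp hv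
        rw [hψ₁off v hvm.2]
        have := hg1b v hvm.1
        omega
      · intro v hv
        have hvm := Finset.mem_sdiff.mp hv
        rw [hψ₂off v hvm.2]
        have := hg2b v hvm.1
        omega
      · intro v hv
        rw [Finset.mem_sdiff, not_and_or, not_not] at hv
        rcases hv with hvW | hvY
        · rw [hψ₁off v (fun h => hvW (hYW h)), hg1off v hvW]
          have := hpark v hvW
          omega
        · rw [hψ₁Y v hvY, hpcval]
      · intro v hv
        rw [Finset.mem_sdiff, not_and_or, not_not] at hv
        rcases hv with hvW | hvY
        · rw [hψ₁off v (fun h => hvW (hYW h)), hψ₂off v (fun h => hvW (hYW h)),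
            hg1off v hvW, hg2off v hvW]
          exact hoff v hvW
        · rw [hψ₁Y v hvY, hψ₂Y v hvY]
      · refine ⟨γ, ?_, ?_⟩
        · intro c' l hl hcond
          refine hγmono c' l hl (fun x hx => ?_)
          have hxW := (Finset.mem_sdiff.mp (hcond x hx).1).1
          exact ⟨hxW, (hcond x hx).2⟩
        · intro v hv
          have hvm := Finset.mem_sdiff.mp hv
          have hne : γ v ≠ c := by
            intro h
            exact hvm.2 (hX₀Y (Finset.mem_filter.mpr ⟨hvm.1, h⟩))
          have := hγ v hvm.1
          omega
    -- assemble
    have hback : Reach (DicolStep A) (Y.card + W.card) ψ₂ φ₂ :=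
      Reach.trans (Reach.symm dicolStep_symm hreP2) (Reach.symm dicolStep_symm hre2)
    have htotal : Reach (DicolStep A)
        (W.card + (Y.card + (4 * c * (W \ Y).card + (Y.card + W.card)))) φ₁ φ₂ :=
      Reach.trans hre1 (Reach.trans hreP1 (Reach.trans hrec hback))
    refine htotal.mono ?_
    have hYle : Y.card ≤ W.card := Finset.card_le_card hYW
    have hWYle : (W \ Y).card ≤ W.card := Finset.card_le_card (Finset.sdiff_subset)
    have hmul : 4 * c * (W \ Y).card ≤ 4 * c * W.card := Nat.mul_le_mul_left _ hWYle
    have hexp : 4 * (c + 1) * W.card = 4 * c * W.card + 4 * W.card := by ring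
    omega

end MainLemma


theorem stmt9 [Fintype V] [DecidableEq V] (A : V → V → Prop) (k : ℕ)
    (hk : digrundy A + 1 ≤ k) (α β : V → Fin k)
    (hα : IsDicolouring A α) (hβ : IsDicolouring A β) :
    ∃ l : List (V → Fin k), RedicolPath A α β l ∧
      l.length ≤ 4 * dichromaticNumber A * Fintype.card V := by
  classical
  rcases isEmpty_or_nonempty V with hV | hV
  · have hab : α = β := funext fun v => (hV.elim v)
    exact ⟨[], ⟨List.Chain.nil, hab⟩, by simp⟩
  · have hχmem : dichromaticNumber A ∈ {k' | ∃ φ : V → Fin k', IsDicolouring A φ} :=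
      Nat.sInf_mem ⟨k, α, hα⟩
    obtain ⟨γF, hγF⟩ := hχmem
    have hγ5 : ∃ γ : V → ℕ, MonoW A Finset.univ γ ∧
        ∀ v ∈ Finset.univ, γ v < dichromaticNumber A :=
      ⟨fun v => (γF v : ℕ), monoW_of_dicol hγF _, fun v _ => (γF v).isLt⟩
    have hk1 : 1 ≤ k := (α (Classical.arbitrary V)).pos
    have hGB : GB A Finset.univ (k - 1) := (gb_univ hV).mono (by omega)
    have hre := main_rec A (dichromaticNumber A) Finset.univ k (k - 1) α β hα hβ
      (fun v _ => (α v).isLt) (fun v _ => (β v).isLt)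
      (fun v hv => absurd (Finset.mem_univ v) hv)
      (fun v hv => absurd (Finset.mem_univ v) hv)
      hGB (by omega) le_rfl hγ5
    obtain ⟨l, hch, hlast, hlen⟩ := hre
    exact ⟨l, ⟨hch, hlast⟩, by simpa [Finset.card_univ] using hlen⟩
end
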